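/- arXiv:1209.0746 — 6 statements merged into one kernel-verified Lean document; each statement's English description precedes it below -/
import Mathlib

section
/- Let k be an algebraically closed field of characteristic zero and X, Y be n×n matrices over k satisfying XY - YX = Y². Then Y is nilpotent. -/
open Module Polynomial

section Aux

variable {k : Type*} [Field k] [IsAlgClosed k] [CharZero k]
variable {V : Type*} [AddCommGroup V] [Module k V] [FiniteDimensional k V]

/-- An endomorphism over an algebraically closed field all of whose eigenvalues
are zero is nilpotent. -/
lemma aux_nilpotent_of_eigen_zero (g : Module.End k V)
    (hg : ∀ μ : k, g.HasEigenvalue μ → μ = 0) : IsNilpotent g := by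
  have hint : IsIntegral k g := Algebra.IsIntegral.isIntegral g
  have hmon : (minpoly k g).Monic := minpoly.monic hint
  have hsplits : (minpoly k g).Splits := IsAlgClosed.splits _
  have hroots : ∀ μ ∈ (minpoly k g).roots, μ = 0 := by
    intro μ hμ
    exact hg μ (Module.End.hasEigenvalue_of_isRoot (isRoot_of_mem_roots hμ))
  have hp : minpoly k g = X ^ Multiset.card (minpoly k g).roots := by
    have h1 := hsplits.eq_prod_roots_of_monic hmon
    have h2 : (minpoly k g).roots
        = Multiset.replicate (Multiset.card (minpoly k g).roots) 0 :=
      Multiset.eq_replicate.2 ⟨rfl, hroots⟩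
    rw [h1]
    nth_rewrite 1 [h2]
    simp [Multiset.map_replicate, Multiset.prod_replicate]
  refine ⟨Multiset.card (minpoly k g).roots, ?_⟩
  have haev := minpoly.aeval k g
  rw [hp] at haev
  simpa using haev

lemma aux_end_nilpotent (f g : Module.End k V) (h : f * g - g * f = g ^ 2) :
    IsNilpotent g := by
  apply aux_nilpotent_of_eigen_zero
  intro μ hμ
  by_contra hμ0
  obtain ⟨v, hv⟩ := hμ.exists_hasEigenvector
  have hv0 : v ≠ 0 := hv.right
  have hgv : g v = μ • v := hv.apply_eq_smul
  set e : Module.End k V := g - μ • 1 with he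
  have hev : e v = 0 := by
    simp [he, hgv, LinearMap.sub_apply]
  have hg2v : (g ^ 2) v = (μ * μ) • v := by
    rw [pow_two, Module.End.mul_apply, hgv, map_smul, hgv, smul_smul]
  have hcomm : e * g = g * e := by
    simp only [he, sub_mul, mul_sub, smul_mul_assoc, mul_smul_comm, one_mul, mul_one]
  have hcomm2 : e * g ^ 2 = g ^ 2 * e := by
    rw [pow_two, ← mul_assoc, hcomm, mul_assoc, hcomm, mul_assoc]
  have hfe : e * f = f * e - g ^ 2 := by
    have hfe' : f * e - e * f = g ^ 2 := by
      simp only [he, mul_sub, sub_mul, mul_smul_comm, smul_mul_assoc, mul_one, one_mul]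
      rw [← h]; abel
    rw [← hfe']; abel
  have key : ∀ m : ℕ, e ^ (m + 1) * f
      = f * e ^ (m + 1) - ((m + 1 : ℕ) : k) • (g ^ 2 * e ^ m) := by
    intro m
    induction m with
    | zero => simpa using hfe
    | succ m ih =>
      have h1 : e ^ (m + 2) * f = e * (e ^ (m + 1) * f) := by
        rw [← mul_assoc, ← pow_succ']
      rw [h1, ih, mul_sub, ← mul_assoc, hfe, mul_smul_comm, ← mul_assoc, hcomm2,
        mul_assoc, ← pow_succ', sub_mul, mul_assoc f, ← pow_succ']
      have hcast : ((m + 1 + 1 : ℕ) : k) = ((m + 1 : ℕ) : k) + 1 := by push_cast; ring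
      rw [hcast, add_smul, one_smul]
      abel
  -- the chain of generalized eigenvectors
  have chain : ∀ j : ℕ, ∃ c : k, c ≠ 0 ∧ (e ^ j) ((f ^ j) v) = c • v := by
    intro j
    induction j with
    | zero => exact ⟨1, one_ne_zero, by simp⟩
    | succ j ih =>
      obtain ⟨c, hc0, hc⟩ := ih
      have hej1 : (e ^ (j + 1)) ((f ^ j) v) = 0 := by
        rw [pow_succ', Module.End.mul_apply, hc, map_smul, hev, smul_zero]
      refine ⟨-(((j + 1 : ℕ) : k)) * (μ * μ) * c, ?_, ?_⟩
      · have hj1 : ((j + 1 : ℕ) : k) ≠ 0 := Nat.cast_ne_zero.2 (Nat.succ_ne_zero j)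
        exact mul_ne_zero (mul_ne_zero (neg_ne_zero.2 hj1) (mul_ne_zero hμ0 hμ0)) hc0
      · have h1 : (e ^ (j + 1)) ((f ^ (j + 1)) v) = (e ^ (j + 1) * f) ((f ^ j) v) := by
          rw [Module.End.mul_apply, ← Module.End.mul_apply f, ← pow_succ']
        rw [h1, key j]
        simp only [LinearMap.sub_apply, Module.End.mul_apply, LinearMap.smul_apply,
          hej1, map_zero, hc, map_smul, hg2v]
        rw [zero_sub, smul_smul, smul_smul, ← neg_smul]
        module
  -- contradiction at j = finrank
  obtain ⟨c, hc0, hc⟩ := chain (finrank k V)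
  have hker : LinearMap.ker (e ^ (finrank k V + 1)) = LinearMap.ker (e ^ finrank k V) :=
    Module.End.ker_pow_eq_ker_pow_finrank_of_le (Nat.le_succ _)
  have hmem : (f ^ finrank k V) v ∈ LinearMap.ker (e ^ (finrank k V + 1)) := by
    rw [LinearMap.mem_ker, pow_succ', Module.End.mul_apply, hc, map_smul, hev, smul_zero]
  rw [hker, LinearMap.mem_ker, hc] at hmem
  exact hv0 ((smul_eq_zero.mp hmem).resolve_left hc0)

end Aux

theorem jordan_Y_nilpotent {k : Type*} [Field k] [IsAlgClosed k] [CharZero k] {n : ℕ}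
    (X Y : Matrix (Fin n) (Fin n) k) (h : X * Y - Y * X = Y ^ 2) :
    IsNilpotent Y := by
  let E := Matrix.toLinAlgEquiv' (R := k) (n := Fin n)
  have h' : E X * E Y - E Y * E X = (E Y) ^ 2 := by
    rw [← map_mul, ← map_mul, ← map_sub, ← map_pow, h]
  have hnil : IsNilpotent (E Y) := aux_end_nilpotent (E X) (E Y) h'
  obtain ⟨m, hm⟩ := hnil
  refine ⟨m, E.injective ?_⟩
  rw [map_pow, hm, map_zero]
end

section
/- Let X, Y be n×n matrices over an algebraically closed field of characteristic zero, and suppose the commutator Z = XY - YX commutes with Y. Then Z is nilpotent. -/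
open Module LinearMap Polynomial

/-- Over an algebraically closed field of characteristic zero, an endomorphism
all of whose positive power traces vanish is nilpotent. -/
lemma aux_isNilpotent_of_trace_pow_eq_zero {K V : Type*} [Field K] [IsAlgClosed K] [CharZero K]
    [AddCommGroup V] [Module K V] [FiniteDimensional K V]
    (f : Module.End K V) (htr : ∀ m : ℕ, 0 < m → trace K V (f ^ m) = 0) :
    IsNilpotent f := by
  classical
  have h_fin : {μ : K | f.maxGenEigenspace μ ≠ ⊥}.Finite :=
    WellFoundedGT.finite_ne_bot_of_iSupIndep f.independent_maxGenEigenspace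
  have hds := DirectSum.isInternal_submodule_of_iSupIndep_of_iSup_eq_top
    f.independent_maxGenEigenspace f.iSup_maxGenEigenspace_eq_top
  set s := h_fin.toFinset with hs
  -- traces of powers of restrictions
  have key : ∀ (μ : K) (m : ℕ),
      trace K (f.maxGenEigenspace μ)
        ((f.restrict (f.mapsTo_maxGenEigenspace_of_comm (Commute.refl f) μ)) ^ m)
        = μ ^ m * (finrank K (f.maxGenEigenspace μ) : K) := by
    intro μ m
    induction m with
    | zero => simp [trace_one]
    | succ m ih =>
      rw [pow_succ, Module.End.mul_eq_comp,
        trace_comp_eq_mul_of_commute_of_isNilpotent μ ((Commute.refl _).pow_left m)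
          (f.isNilpotent_restrict_maxGenEigenspace_sub_algebraMap μ), ih]
      ring
  have hmaps : ∀ (m : ℕ) (μ : K),
      Set.MapsTo (f ^ m) (f.maxGenEigenspace μ) (f.maxGenEigenspace μ) :=
    fun m μ => f.mapsTo_maxGenEigenspace_of_comm ((Commute.refl f).pow_right m) μ
  have hsum : ∀ m : ℕ, 0 < m →
      ∑ μ ∈ s, μ ^ m * (finrank K (f.maxGenEigenspace μ) : K) = 0 := by
    intro m hm
    have h2 := htr m hm
    rw [trace_eq_sum_trace_restrict' hds h_fin (hmaps m)] at h2
    rw [← h2]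
    refine Finset.sum_congr rfl fun μ _ => ?_
    rw [← key μ m]; exact congrArg _ (Module.End.pow_restrict m _ _)
  -- every eigenvalue is zero
  have hzero : ∀ μ ∈ s, μ = 0 := by
    intro l hl
    by_contra hne
    set q : Polynomial K := Polynomial.X * ∏ ν ∈ s.erase l, (Polynomial.X - Polynomial.C ν)
      with hq
    have hA0 : ∑ μ ∈ s, (finrank K (f.maxGenEigenspace μ) : K) * q.eval μ = 0 := by
      have hev : ∀ μ : K, q.eval μ
          = ∑ j ∈ Finset.range (q.natDegree + 1), q.coeff j * μ ^ j :=
        fun μ => q.eval_eq_sum_range μ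
      simp_rw [hev, Finset.mul_sum]
      rw [Finset.sum_comm]
      refine Finset.sum_eq_zero fun j _ => ?_
      rcases Nat.eq_zero_or_pos j with h0 | h0
      · have hc : q.coeff 0 = 0 := by
          rw [Polynomial.coeff_zero_eq_eval_zero, hq]
          simp
        subst h0
        simp [hc]
      · have h3 := hsum j h0
        calc ∑ μ ∈ s, (finrank K (f.maxGenEigenspace μ) : K) * (q.coeff j * μ ^ j)
            = q.coeff j * ∑ μ ∈ s, μ ^ j * (finrank K (f.maxGenEigenspace μ) : K) := by
              rw [Finset.mul_sum]; exact Finset.sum_congr rfl fun μ _ => by ring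
          _ = 0 := by rw [h3, mul_zero]
    have hA1 : ∑ μ ∈ s, (finrank K (f.maxGenEigenspace μ) : K) * q.eval μ
        = (finrank K (f.maxGenEigenspace l) : K) * q.eval l := by
      refine Finset.sum_eq_single l (fun μ hμ hne' => ?_) (fun h => absurd hl h)
      have : q.eval μ = 0 := by
        rw [hq]
        simp only [Polynomial.eval_mul, Polynomial.eval_prod, Polynomial.eval_X,
          Polynomial.eval_sub, Polynomial.eval_C]
        apply mul_eq_zero_of_right
        exact Finset.prod_eq_zero (Finset.mem_erase.mpr ⟨hne', hμ⟩) (by ring)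
      rw [this, mul_zero]
    have hd : (finrank K (f.maxGenEigenspace l) : K) ≠ 0 := by
      have hbot : f.maxGenEigenspace l ≠ ⊥ := by
        simpa [hs] using hl
      have hnt : Nontrivial (f.maxGenEigenspace l) :=
        Submodule.nontrivial_iff_ne_bot.mpr hbot
      have : 0 < finrank K (f.maxGenEigenspace l) := Module.finrank_pos_iff.mpr hnt
      exact_mod_cast this.ne'
    have hql : q.eval l ≠ 0 := by
      rw [hq]
      simp only [Polynomial.eval_mul, Polynomial.eval_prod, Polynomial.eval_X,
        Polynomial.eval_sub, Polynomial.eval_C]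
      refine mul_ne_zero hne (Finset.prod_ne_zero_iff.mpr fun ν hν => ?_)
      exact sub_ne_zero.mpr (Ne.symm (Finset.mem_erase.mp hν).1)
    rw [hA1] at hA0
    exact (mul_ne_zero hd hql) hA0
  -- conclude nilpotency
  have htop : f.maxGenEigenspace 0 = ⊤ := by
    rw [← f.iSup_maxGenEigenspace_eq_top]
    refine le_antisymm (le_iSup _ 0) (iSup_le fun μ => ?_)
    by_cases hbot : f.maxGenEigenspace μ = ⊥
    · simp [hbot]
    · have : μ ∈ s := by simpa [hs] using hbot
      rw [hzero μ this]
  refine ((LinearMap.charpoly_nilpotent_tfae f).out 2 0).mp fun v => ?_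
  have hv : v ∈ f.maxGenEigenspace 0 := htop ▸ Submodule.mem_top
  rw [Module.End.mem_maxGenEigenspace] at hv
  obtain ⟨n, hn⟩ := hv
  exact ⟨n, by simpa using hn⟩

theorem commutator_commuting_with_Y_nilpotent {k : Type*} [Field k] [IsAlgClosed k] [CharZero k]
    {n : ℕ} (X Y : Matrix (Fin n) (Fin n) k)
    (h : (X * Y - Y * X) * Y = Y * (X * Y - Y * X)) :
    IsNilpotent (X * Y - Y * X) := by
  set Z := X * Y - Y * X with hZ
  have hcomm : Commute Z Y := h
  have htr : ∀ m : ℕ, 0 < m → Matrix.trace (Z ^ m) = 0 := by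
    intro m hm
    obtain ⟨r, rfl⟩ := Nat.exists_eq_add_of_lt hm
    rw [zero_add, pow_succ]
    have hZr : Z ^ r * Y = Y * Z ^ r := (hcomm.pow_left r).eq
    calc Matrix.trace (Z ^ r * Z)
        = Matrix.trace (Z ^ r * (X * Y)) - Matrix.trace (Z ^ r * (Y * X)) := by
          rw [hZ, mul_sub, Matrix.trace_sub]
      _ = 0 := by
          rw [show Z ^ r * (Y * X) = Y * (Z ^ r * X) by rw [← mul_assoc, hZr, mul_assoc],
            Matrix.trace_mul_comm Y (Z ^ r * X), mul_assoc]
          ring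
  -- transfer to endomorphisms
  have hf := aux_isNilpotent_of_trace_pow_eq_zero (Matrix.toLinAlgEquiv' Z) ?_
  · obtain ⟨m, hm⟩ := hf
    refine ⟨m, ?_⟩
    have : (Matrix.toLinAlgEquiv' (R := k) (n := Fin n)) (Z ^ m) = 0 := by
      rw [map_pow, hm]
    simpa using congrArg (Matrix.toLinAlgEquiv' (R := k) (n := Fin n)).symm this
  · intro m hm
    rw [← map_pow]
    have he : (Matrix.toLinAlgEquiv' (R := k) (n := Fin n)) (Z ^ m)
        = Matrix.toLin' (Z ^ m) := rfl
    rw [he, LinearMap.trace_eq_matrix_trace k (Pi.basisFun k (Fin n)),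
      LinearMap.toMatrix_eq_toMatrix', LinearMap.toMatrix'_toLin']
    exact htr m hm
end

section
/- Let A be a finite-dimensional associative algebra over an algebraically closed field k of characteristic zero, generated by elements X and Y satisfying XY - YX = Y² with Y nilpotent. If Q ∈ A is nilpotent, then Q belongs to the Jacobson radical of A. -/
set_option maxHeartbeats 1000000

section NJAux

variable {k : Type*} [Field k] {A : Type*} [Ring A] [Algebra k A]

/-- Span of the monomials `Y^a * X^b` with `a ≥ n`. -/
def njT (k : Type*) [Field k] {A : Type*} [Ring A] [Algebra k A] (X Y : A) (n : ℕ) :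
    Submodule k A :=
  Submodule.span k {w | ∃ a b : ℕ, n ≤ a ∧ w = Y ^ a * X ^ b}

variable (X Y : A)

theorem njT_mem {n a b : ℕ} (h : n ≤ a) : Y ^ a * X ^ b ∈ njT k X Y n :=
  Submodule.subset_span ⟨a, b, h, rfl⟩

theorem njT_anti {m n : ℕ} (h : m ≤ n) : njT k X Y n ≤ njT k X Y m :=
  Submodule.span_mono fun _ ⟨a, b, ha, hw⟩ => ⟨a, b, h.trans ha, hw⟩

theorem njT_anti_mem {m n : ℕ} (h : m ≤ n) {w : A} (hw : w ∈ njT k X Y n) :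
    w ∈ njT k X Y m := by
  exact njT_anti X Y h hw

variable {X Y}

theorem njT_Y_mul {n : ℕ} {w : A} (hw : w ∈ njT k X Y n) : Y * w ∈ njT k X Y (n + 1) := by
  induction hw using Submodule.span_induction with
  | mem w hw =>
    obtain ⟨a, b, ha, rfl⟩ := hw
    rw [← mul_assoc, ← pow_succ']
    exact njT_mem X Y (by omega)
  | zero => rw [mul_zero]; exact zero_mem _
  | add x y hx hy ihx ihy => rw [mul_add]; exact add_mem ihx ihy
  | smul c x hx ih => rw [mul_smul_comm]; exact Submodule.smul_mem _ _ ih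

theorem njT_mul_X {n : ℕ} {w : A} (hw : w ∈ njT k X Y n) : w * X ∈ njT k X Y n := by
  induction hw using Submodule.span_induction with
  | mem w hw =>
    obtain ⟨a, b, ha, rfl⟩ := hw
    rw [mul_assoc, ← pow_succ]
    exact njT_mem X Y ha
  | zero => rw [zero_mul]; exact zero_mem _
  | add x y hx hy ihx ihy => rw [add_mul]; exact add_mem ihx ihy
  | smul c x hx ih => rw [smul_mul_assoc]; exact Submodule.smul_mem _ _ ih

theorem njT_Ypow_mul {n : ℕ} {w : A} (hw : w ∈ njT k X Y n) (a : ℕ) :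
    Y ^ a * w ∈ njT k X Y (a + n) := by
  induction a with
  | zero => simpa using hw
  | succ a ih =>
    rw [pow_succ', mul_assoc]
    exact njT_anti X Y (le_of_eq (Nat.add_right_comm a 1 n)) (njT_Y_mul ih)

theorem njT_eq_bot {m n : ℕ} (hYm : Y ^ m = 0) (h : m ≤ n) : njT k X Y n = ⊥ := by
  rw [njT, Submodule.span_eq_bot]
  rintro w ⟨a, b, ha, rfl⟩
  have hz : Y ^ a = 0 := by
    have he : a = m + (a - m) := by omega
    rw [he, pow_add, hYm, zero_mul]
  rw [hz, zero_mul]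

variable (hrel : X * Y - Y * X = Y ^ 2)
include hrel

theorem njXY : X * Y = Y * X + Y ^ 2 := by
  rw [← hrel]; noncomm_ring

theorem njXYpow (a : ℕ) : X * Y ^ a = Y ^ a * X + a • Y ^ (a + 1) := by
  induction a with
  | zero => simp
  | succ a ih =>
    have hyy : Y ^ a * Y ^ 2 = Y ^ (a + 1) * Y := by
      rw [← pow_succ]; exact (pow_add Y a 2).symm
    calc X * Y ^ (a + 1) = X * Y ^ a * Y := by rw [pow_succ, mul_assoc]
      _ = (Y ^ a * X + a • Y ^ (a + 1)) * Y := by rw [ih]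
      _ = Y ^ a * (X * Y) + a • (Y ^ (a + 1) * Y) := by
            rw [add_mul, mul_assoc, smul_mul_assoc]
      _ = (Y ^ a * (Y * X) + Y ^ (a + 1) * Y) + a • (Y ^ (a + 1) * Y) := by
            rw [njXY hrel, mul_add, hyy]
      _ = Y ^ (a + 1) * X + (a + 1) • Y ^ (a + 1 + 1) := by
            rw [← mul_assoc, ← pow_succ, ← pow_succ, succ_nsmul,
              add_assoc, add_comm (Y ^ (a + 1 + 1))]

theorem njT_X_mul {n : ℕ} {w : A} (hw : w ∈ njT k X Y n) : X * w ∈ njT k X Y n := by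
  induction hw using Submodule.span_induction with
  | mem w hw =>
    obtain ⟨a, b, ha, rfl⟩ := hw
    rw [← mul_assoc, njXYpow hrel, add_mul, mul_assoc, ← pow_succ', smul_mul_assoc]
    exact add_mem (njT_mem X Y ha) (nsmul_mem (njT_mem X Y (ha.trans a.le_succ)) a)
  | zero => rw [mul_zero]; exact zero_mem _
  | add x y hx hy ihx ihy => rw [mul_add]; exact add_mem ihx ihy
  | smul c x hx ih => rw [mul_smul_comm]; exact Submodule.smul_mem _ _ ih

theorem njT_Xpow_Ypow (b c : ℕ) : X ^ b * Y ^ c ∈ njT k X Y c := by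
  induction b with
  | zero => simpa using njT_mem (b := 0) X Y (le_refl c)
  | succ b ih =>
    rw [pow_succ', mul_assoc]
    exact njT_X_mul hrel ih

theorem njT_mul_Xpow {n : ℕ} {w : A} (hw : w ∈ njT k X Y n) (d : ℕ) :
    w * X ^ d ∈ njT k X Y n := by
  induction d with
  | zero => simpa using hw
  | succ d ih =>
    rw [pow_succ, ← mul_assoc]
    exact njT_mul_X ih

theorem njT_mul {i j : ℕ} {u v : A} (hu : u ∈ njT k X Y i) (hv : v ∈ njT k X Y j) :
    u * v ∈ njT k X Y (i + j) := by
  have h := Submodule.mul_mem_mul hu hv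
  rw [njT, njT, Submodule.span_mul_span] at h
  refine Submodule.span_le.mpr ?_ h
  rintro w hw
  rw [Set.mem_mul] at hw
  obtain ⟨u', ⟨a, b, ha, rfl⟩, v', ⟨c, d, hc, rfl⟩, rfl⟩ := hw
  have h1 : Y ^ a * X ^ b * (Y ^ c * X ^ d) = Y ^ a * (X ^ b * Y ^ c * X ^ d) := by
    noncomm_ring
  rw [h1]
  refine SetLike.mem_coe.mpr (njT_anti X Y (add_le_add ha hc) ?_)
  exact njT_Ypow_mul (njT_mul_Xpow hrel (njT_Xpow_Ypow hrel b c) d) a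

theorem njT_pow {w : A} (hw : w ∈ njT k X Y 1) (j : ℕ) : w ^ (j + 1) ∈ njT k X Y (j + 1) := by
  induction j with
  | zero => simpa using hw
  | succ j ih =>
    rw [pow_succ]
    exact njT_mul hrel ih hw

theorem njT_nilpotent {w : A} (hY : IsNilpotent Y) (hw : w ∈ njT k X Y 1) : IsNilpotent w := by
  obtain ⟨m, hm⟩ := hY
  refine ⟨m + 1, ?_⟩
  have h := njT_pow hrel hw m
  rwa [njT_eq_bot hm (Nat.le_succ m), Submodule.mem_bot] at h

theorem njT_mul_Y {n : ℕ} {w : A} (hw : w ∈ njT k X Y n) : w * Y ∈ njT k X Y n := by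
  induction hw using Submodule.span_induction with
  | mem w hw =>
    obtain ⟨a, b, ha, rfl⟩ := hw
    rw [mul_assoc]
    have h1 : X ^ b * Y ∈ njT k X Y 1 := by simpa using njT_Xpow_Ypow hrel b 1
    exact njT_anti X Y (by omega) (njT_Ypow_mul h1 a)
  | zero => rw [zero_mul]; exact zero_mem _
  | add x y hx hy ihx ihy => rw [add_mul]; exact add_mem ihx ihy
  | smul c x hx ih => rw [smul_mul_assoc]; exact Submodule.smul_mem _ _ ih

variable (hgen : Algebra.adjoin k ({X, Y} : Set A) = ⊤)
include hgen

theorem njT_mul_left {n : ℕ} (z : A) {w : A} (hw : w ∈ njT k X Y n) :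
    z * w ∈ njT k X Y n := by
  have hz : z ∈ Algebra.adjoin k ({X, Y} : Set A) := by rw [hgen]; exact Algebra.mem_top
  revert w
  induction hz using Algebra.adjoin_induction with
  | mem x hx =>
    intro w hw
    rcases hx with rfl | rfl
    · exact njT_X_mul hrel hw
    · exact njT_anti X x n.le_succ (njT_Y_mul hw)
  | algebraMap r =>
    intro w hw
    rw [Algebra.algebraMap_eq_smul_one, smul_mul_assoc, one_mul]
    exact Submodule.smul_mem _ _ hw
  | add x y hx hy ihx ihy =>
    intro w hw
    rw [add_mul]; exact add_mem (ihx hw) (ihy hw)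
  | mul x y hx hy ihx ihy =>
    intro w hw
    rw [mul_assoc]; exact ihx (ihy hw)

theorem njT_mul_right {n : ℕ} (z : A) {w : A} (hw : w ∈ njT k X Y n) :
    w * z ∈ njT k X Y n := by
  have hz : z ∈ Algebra.adjoin k ({X, Y} : Set A) := by rw [hgen]; exact Algebra.mem_top
  revert w
  induction hz using Algebra.adjoin_induction with
  | mem x hx =>
    intro w hw
    rcases hx with rfl | rfl
    · exact njT_mul_X hw
    · exact njT_mul_Y hrel hw
  | algebraMap r =>
    intro w hw
    rw [Algebra.algebraMap_eq_smul_one, mul_smul_comm, mul_one]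
    exact Submodule.smul_mem _ _ hw
  | add x y hx hy ihx ihy =>
    intro w hw
    rw [mul_add]; exact add_mem (ihx hw) (ihy hw)
  | mul x y hx hy ihx ihy =>
    intro w hw
    rw [← mul_assoc]; exact ihy (ihx hw)

theorem nj_decomp (z : A) :
    ∃ q ∈ Algebra.adjoin k ({X} : Set A), ∃ t ∈ njT k X Y 1, z = q + t := by
  have hz : z ∈ Algebra.adjoin k ({X, Y} : Set A) := by rw [hgen]; exact Algebra.mem_top
  induction hz using Algebra.adjoin_induction with
  | mem x hx =>
    rcases hx with rfl | rfl
    · exact ⟨x, Algebra.self_mem_adjoin_singleton k x, 0, zero_mem _, (add_zero x).symm⟩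
    · refine ⟨0, zero_mem _, x, ?_, (zero_add x).symm⟩
      simpa using njT_mem (a := 1) (b := 0) X x (le_refl 1)
  | algebraMap r =>
    exact ⟨algebraMap k A r, Subalgebra.algebraMap_mem _ r, 0, zero_mem _, (add_zero _).symm⟩
  | add x y hx hy ihx ihy =>
    obtain ⟨q1, hq1, t1, ht1, rfl⟩ := ihx
    obtain ⟨q2, hq2, t2, ht2, rfl⟩ := ihy
    exact ⟨q1 + q2, add_mem hq1 hq2, t1 + t2, add_mem ht1 ht2, by abel⟩
  | mul x y hx hy ihx ihy =>
    obtain ⟨q1, hq1, t1, ht1, rfl⟩ := ihx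
    obtain ⟨q2, hq2, t2, ht2, rfl⟩ := ihy
    have h12 := njT_mul hrel ht1 ht2
    have h3 : q1 * t2 + (t1 * q2 + t1 * t2) ∈ njT k X Y 1 :=
      add_mem (njT_mul_left hrel hgen q1 ht2) (add_mem (njT_mul_right hrel hgen q2 ht1)
        (njT_anti_mem (X := X) (Y := Y) (Nat.le_succ 1) h12))
    have he : (q1 + t1) * (q2 + t2) = q1 * q2 + (q1 * t2 + (t1 * q2 + t1 * t2)) := by
      noncomm_ring
    exact ⟨q1 * q2, mul_mem hq1 hq2, q1 * t2 + (t1 * q2 + t1 * t2), h3, he⟩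

theorem nj_pow_sub {t x : A} (ht : t ∈ njT k X Y 1) (j : ℕ) :
    (t + x) ^ j - x ^ j ∈ njT k X Y 1 := by
  induction j with
  | zero => simpa using zero_mem _
  | succ j ih =>
    have h : (t + x) ^ (j + 1) - x ^ (j + 1) =
        ((t + x) ^ j - x ^ j) * (t + x) + x ^ j * t := by
      rw [pow_succ, pow_succ]; noncomm_ring
    rw [h]
    exact add_mem (njT_mul_right hrel hgen _ ih) (njT_mul_left hrel hgen _ ht)

theorem nj_nilpotent_add {t q : A} (hY : IsNilpotent Y) (ht : t ∈ njT k X Y 1)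
    (hq : IsNilpotent q) : IsNilpotent (t + q) := by
  obtain ⟨n, hn⟩ := hq
  have h1 : (t + q) ^ n ∈ njT k X Y 1 := by
    have h := nj_pow_sub hrel hgen (x := q) ht n
    rwa [hn, sub_zero] at h
  obtain ⟨c, hc⟩ := njT_nilpotent hrel hY h1
  exact ⟨n * c, by rw [pow_mul, hc]⟩

end NJAux

theorem nj_adjoin_comm {k : Type*} [Field k] {A : Type*} [Ring A] [Algebra k A] {X u v : A}
    (hu : u ∈ Algebra.adjoin k ({X} : Set A)) (hv : v ∈ Algebra.adjoin k ({X} : Set A)) :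
    Commute u v := by
  rw [Algebra.adjoin_singleton_eq_range_aeval] at hu hv
  obtain ⟨p, rfl⟩ := hu
  obtain ⟨q, rfl⟩ := hv
  show _ * _ = _ * _
  rw [← map_mul, ← map_mul, mul_comm]

theorem nilpotent_mem_jacobson {k : Type*} [Field k] [IsAlgClosed k] [CharZero k]
    {A : Type*} [Ring A] [Algebra k A] [FiniteDimensional k A]
    (X Y : A) (hgen : Algebra.adjoin k ({X, Y} : Set A) = ⊤)
    (hrel : X * Y - Y * X = Y ^ 2) (hY : IsNilpotent Y)
    (Q : A) (hQ : IsNilpotent Q) :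
    Q ∈ Ideal.jacobson (⊥ : Ideal A) := by
  obtain ⟨q, hqK, t, ht, hQt⟩ := nj_decomp hrel hgen Q
  obtain ⟨N, hN⟩ := hQ
  have hqnil : IsNilpotent q := by
    have hq : -t + Q = q := by rw [hQt]; abel
    have h2 := nj_pow_sub hrel hgen (x := Q) (neg_mem ht) N
    rw [hq, hN, sub_zero] at h2
    obtain ⟨c, hc⟩ := njT_nilpotent hrel hY h2
    exact ⟨N * c, by rw [pow_mul, hc]⟩
  have key : ∀ z : A, IsNilpotent (z * Q) := by
    intro z
    obtain ⟨q', hq'K, t', ht', rfl⟩ := nj_decomp hrel hgen z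
    have hzQ : (q' + t') * Q = (t' * Q + q' * t) + q' * q := by
      rw [hQt]; noncomm_ring
    rw [hzQ]
    refine nj_nilpotent_add hrel hgen hY ?_ ?_
    · exact add_mem (njT_mul_right hrel hgen Q ht') (njT_mul_left hrel hgen q' ht)
    · exact (nj_adjoin_comm hq'K hqK).isNilpotent_mul_left hqnil
  rw [Ideal.jacobson]
  rw [Submodule.mem_sInf]
  rintro M ⟨-, hM⟩
  by_contra hQM
  have hlt : M < M ⊔ Ideal.span {Q} := by
    refine left_lt_sup.mpr fun hle => hQM ?_
    exact hle (Ideal.subset_span rfl)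
  have htop : M ⊔ Ideal.span {Q} = ⊤ := hM.out.2 _ hlt
  have h1 : (1 : A) ∈ M ⊔ Ideal.span {Q} := htop ▸ Submodule.mem_top
  obtain ⟨s, hs, u, hu, hsu⟩ := Submodule.mem_sup.mp h1
  obtain ⟨z, rfl⟩ := Submodule.mem_span_singleton.mp hu
  have hnil : IsNilpotent (z • Q) := by simpa [smul_eq_mul] using key z
  have hsunit : IsUnit s := by
    have hse : s = 1 - z • Q := by rw [← hsu]; abel
    rw [hse]
    exact hnil.isUnit_one_sub
  exact hM.ne_top (Ideal.eq_top_of_isUnit_mem M hs hsunit)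
end

section
/- Every k-algebra automorphism of the Jordan plane R = k⟨x,y⟩/(xy - yx - y²) has the form x ↦ αx + p(y), y ↦ αy, for some nonzero α ∈ k and polynomial p ∈ k[y]; consequently Aut(R) is isomorphic to a semidirect product of the additive group k[y] and the multiplicative group k*. -/
/-- The defining relation of the Jordan plane: `x * y = y * x + y * y`. -/
inductive JordanRel (k : Type) [Field k] : FreeAlgebra k Bool → FreeAlgebra k Bool → Prop
  | rel : JordanRel k (FreeAlgebra.ι k true * FreeAlgebra.ι k false)
      (FreeAlgebra.ι k false * FreeAlgebra.ι k true + FreeAlgebra.ι k false * FreeAlgebra.ι k false)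

/-- The Jordan plane `R = k⟨x,y⟩/(xy - yx - y²)`. -/
abbrev JordanPlane (k : Type) [Field k] := RingQuot (JordanRel k)

/-- The generator `x` of the Jordan plane. -/
noncomputable def jx (k : Type) [Field k] : JordanPlane k :=
  RingQuot.mkAlgHom k (JordanRel k) (FreeAlgebra.ι k true)

/-- The generator `y` of the Jordan plane. -/
noncomputable def jy (k : Type) [Field k] : JordanPlane k :=
  RingQuot.mkAlgHom k (JordanRel k) (FreeAlgebra.ι k false)

open MvPolynomial

variable (k : Type) [Field k]

noncomputable abbrev Mod2 := MvPolynomial (Fin 2) k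

/-- multiplication by t = X 1 -/
noncomputable def Tmul : Module.End k (Mod2 k) := LinearMap.mulLeft k (MvPolynomial.X 1)

/-- s-derivative plus t² times t-derivative -/
noncomputable def Dmul : Module.End k (Mod2 k) :=
  (pderiv (0 : Fin 2)).toLinearMap +
    (LinearMap.mulLeft k (MvPolynomial.X 1 ^ 2)).comp (pderiv (1 : Fin 2)).toLinearMap

theorem DT_rel : Dmul k * Tmul k = Tmul k * Dmul k + Tmul k * Tmul k := by
  apply LinearMap.ext
  intro f
  show Dmul k (Tmul k f) = Tmul k (Dmul k f) + Tmul k (Tmul k f)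
  simp only [Dmul, Tmul, LinearMap.add_apply, LinearMap.comp_apply, LinearMap.mulLeft_apply,
    Derivation.coeFn_coe, pderiv_mul, pderiv_X_self, pderiv_X, Pi.single_apply]
  simp [pderiv_mul, pderiv_X, Pi.single_apply]
  ring

theorem Tmul_pow_apply (a : ℕ) (f : Mod2 k) :
    (Tmul k ^ a) f = MvPolynomial.X 1 ^ a * f := by
  rw [Tmul, LinearMap.pow_mulLeft, LinearMap.mulLeft_apply]

theorem Dmul_s_pow (m : ℕ) :
    Dmul k ((MvPolynomial.X 0 : Mod2 k) ^ (m + 1)) = ((m : k) + 1) • MvPolynomial.X 0 ^ m := by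
  simp [Dmul, pderiv_pow, pderiv_X, Pi.single_apply, smul_eq_C_mul]

theorem Dmul_pow_s_pow (b j : ℕ) :
    (Dmul k ^ b) ((MvPolynomial.X 0 : Mod2 k) ^ (b + j)) =
      (((b + j).descFactorial b : k)) • MvPolynomial.X 0 ^ j := by
  induction b generalizing j with
  | zero => simp
  | succ b ih =>
    have h : b + 1 + j = (b + j) + 1 := by omega
    rw [h, pow_succ, Module.End.mul_apply, Dmul_s_pow, map_smul, ih]
    rw [smul_smul, Nat.succ_descFactorial_succ]
    push_cast
    ring_nf

namespace JP
variable (k : Type) [Field k]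

local notation "R" => JordanPlane k
local notation "X" => jx k
local notation "Y" => jy k

theorem rel : X * Y = Y * X + Y * Y := by
  rw [jx, jy, ← map_mul, ← map_mul, ← map_mul, ← map_add]
  exact RingQuot.mkAlgHom_rel k JordanRel.rel

/-- extensionality for algebra homs out of the Jordan plane -/
theorem algHom_ext {A : Type*} [Semiring A] [Algebra k A] (f g : R →ₐ[k] A)
    (hx : f X = g X) (hy : f Y = g Y) : f = g := by
  apply RingQuot.ringQuot_ext'
  apply FreeAlgebra.hom_ext
  funext b
  cases b <;> simpa using (by assumption)

/-- commutation: `X * Y^c = Y^c * X + c • Y^(c+1)` -/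
theorem commX_powY (c : ℕ) : X * Y ^ c = Y ^ c * X + (c : k) • (Y ^ (c + 1)) := by
  induction c with
  | zero => simp
  | succ c ih =>
    calc X * Y ^ (c + 1) = (X * Y ^ c) * Y := by rw [pow_succ, mul_assoc]
      _ = Y ^ c * (X * Y) + (c : k) • (Y ^ (c+1) * Y) := by
          rw [ih, add_mul, mul_assoc, smul_mul_assoc]
      _ = Y ^ (c+1) * X + ((c : k) + 1) • Y ^ (c + 2) := by
          rw [rel k, mul_add, add_smul, one_smul]
          rw [show Y ^ c * (Y * X) = Y ^ (c+1) * X by rw [pow_succ, mul_assoc]]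
          rw [show Y ^ c * (Y * Y) = Y ^ (c+2) by rw [pow_succ, pow_succ, mul_assoc]]
          rw [show Y ^ (c+1) * Y = Y ^ (c+2) by rw [← pow_succ]]
          abel
      _ = Y ^ (c+1) * X + ((c+1 : ℕ) : k) • Y ^ (c + 1 + 1) := by push_cast; ring_nf
  
/-- the monomials `Y^a X^b` -/
noncomputable def B (ab : ℕ × ℕ) : R := Y ^ ab.1 * X ^ ab.2

theorem Y_mul_B (a b : ℕ) : Y * B k (a, b) = B k (a+1, b) := by
  rw [B, B, ← mul_assoc, ← pow_succ']

theorem X_mul_B (a b : ℕ) : X * B k (a, b) = B k (a, b+1) + (a : k) • B k (a+1, b) := by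
  rw [B, B, B, ← mul_assoc, commX_powY, add_mul, smul_mul_assoc, mul_assoc, ← pow_succ']

theorem span_B_top : Submodule.span k (Set.range (B k)) = ⊤ := by
  set V := Submodule.span k (Set.range (B k)) with hV
  have hmem : ∀ a b : ℕ, B k (a, b) ∈ V := fun a b => Submodule.subset_span ⟨(a, b), rfl⟩
  have hone : (1 : R) ∈ V := by
    have := hmem 0 0
    simpa [B] using this
  have hYmul : ∀ r ∈ V, Y * r ∈ V := by
    intro r hr
    induction hr using Submodule.span_induction with
    | mem z hz => obtain ⟨⟨a, b⟩, rfl⟩ := hz; rw [Y_mul_B]; exact hmem _ _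
    | zero => simpa using V.zero_mem
    | add u v _ _ hu hv => simpa [mul_add] using V.add_mem hu hv
    | smul a u _ hu => simpa [mul_smul_comm] using V.smul_mem a hu
  have hXmul : ∀ r ∈ V, X * r ∈ V := by
    intro r hr
    induction hr using Submodule.span_induction with
    | mem z hz =>
      obtain ⟨⟨a, b⟩, rfl⟩ := hz
      rw [X_mul_B]
      exact V.add_mem (hmem _ _) (V.smul_mem _ (hmem _ _))
    | zero => simpa using V.zero_mem
    | add u v _ _ hu hv => simpa [mul_add] using V.add_mem hu hv
    | smul a u _ hu => simpa [mul_smul_comm] using V.smul_mem a hu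
  rw [eq_top_iff]
  rintro r -
  obtain ⟨w, rfl⟩ := RingQuot.mkAlgHom_surjective k (JordanRel k) r
  have key : ∀ w : FreeAlgebra k Bool, ∀ r ∈ V,
      RingQuot.mkAlgHom k (JordanRel k) w * r ∈ V := by
    intro w
    induction w using FreeAlgebra.induction with
    | grade0 a => intro r hr; simpa [Algebra.smul_def] using V.smul_mem a hr
    | grade1 b =>
      cases b
      · exact fun r hr => hYmul r hr
      · exact fun r hr => hXmul r hr
    | mul u v hu hv => intro r hr; rw [map_mul, mul_assoc]; exact hu _ (hv _ hr)
    | add u v hu hv => intro r hr; rw [map_add, add_mul]; exact V.add_mem (hu r hr) (hv r hr)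
  simpa using key w 1 hone

end JP

namespace JP
open MvPolynomial
variable (k : Type) [Field k]

/-- the representation of the Jordan plane on k[s,t] -/
noncomputable def rep : JordanPlane k →ₐ[k] Module.End k (Mod2 k) :=
  RingQuot.liftAlgHom k ⟨FreeAlgebra.lift k (fun b => if b then Dmul k else Tmul k), by
    rintro _ _ ⟨⟩
    simp only [map_mul, map_add, FreeAlgebra.lift_ι_apply]
    simpa using DT_rel k⟩

theorem rep_jx : rep k (jx k) = Dmul k := by
  rw [jx, rep, RingQuot.liftAlgHom_mkAlgHom_apply, FreeAlgebra.lift_ι_apply]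
  simp

theorem rep_jy : rep k (jy k) = Tmul k := by
  rw [jy, rep, RingQuot.liftAlgHom_mkAlgHom_apply, FreeAlgebra.lift_ι_apply]
  simp

theorem rep_B (a b : ℕ) : rep k (B k (a, b)) = Tmul k ^ a * Dmul k ^ b := by
  rw [B, map_mul, map_pow, map_pow, rep_jx, rep_jy]

variable [CharZero k]

theorem linearIndependent_B : LinearIndependent k (B k) := by
  classical
  rw [linearIndependent_iff]
  intro l hl
  set n := (l.support.sup Prod.snd) + 1 with hn
  have hbn : ∀ p ∈ l.support, p.2 < n := by
    intro p hp
    have := Finset.le_sup (f := Prod.snd) hp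
    omega
  have e1 : rep k (Finsupp.linearCombination k (B k) l) = 0 := by rw [hl, map_zero]
  have e2 : ∑ p ∈ l.support, l p • rep k (B k p) = 0 := by
    rw [← e1, Finsupp.linearCombination_apply, Finsupp.sum, map_sum]
    simp [map_smul]
  have e3 : ∑ p ∈ l.support, l p • (rep k (B k p) ((MvPolynomial.X 0 : Mod2 k) ^ n)) = 0 := by
    have := congrArg (fun g : Module.End k (Mod2 k) => g ((MvPolynomial.X 0 : Mod2 k) ^ n)) e2
    simpa [LinearMap.sum_apply] using this
  have e4' : ∑ p ∈ l.support, l p • (rep k (B k p) ((MvPolynomial.X 0 : Mod2 k) ^ n))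
      = ∑ p ∈ l.support, (l p * (n.descFactorial p.2 : k)) •
      (MvPolynomial.monomial (Finsupp.single (1 : Fin 2) p.1 + Finsupp.single (0 : Fin 2) (n - p.2))
        (1 : k)) := by
    apply Finset.sum_congr rfl
    rintro ⟨a, b⟩ hp
    have hb : b < n := hbn _ hp
    have hsplit : n = b + (n - b) := by omega
    rw [rep_B, Module.End.mul_apply, hsplit, Dmul_pow_s_pow, map_smul, Tmul_pow_apply]
    rw [X_pow_eq_monomial, X_pow_eq_monomial, monomial_mul, one_mul, smul_smul]
    have h2 : b + (n - b) - b = n - b := by omega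
    rw [h2]
  have e4 : ∑ p ∈ l.support, (l p * (n.descFactorial p.2 : k)) •
      (MvPolynomial.monomial (Finsupp.single (1 : Fin 2) p.1 + Finsupp.single (0 : Fin 2) (n - p.2))
        (1 : k)) = 0 := e4'.symm.trans e3
  ext ab
  simp only [Finsupp.coe_zero, Pi.zero_apply]
  by_cases hab : ab ∈ l.support
  · obtain ⟨a₀, b₀⟩ := ab
    have hb₀ : b₀ < n := hbn _ hab
    have e5 := congrArg (MvPolynomial.coeff
      (Finsupp.single (1 : Fin 2) a₀ + Finsupp.single (0 : Fin 2) (n - b₀))) e4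
    rw [MvPolynomial.coeff_sum] at e5
    rw [Finset.sum_eq_single_of_mem (a₀, b₀) hab ?side] at e5
    · simp only [MvPolynomial.coeff_smul, MvPolynomial.coeff_monomial, eq_self_iff_true,
        if_true, MvPolynomial.coeff_zero, smul_eq_mul, mul_one] at e5
      have hd : ((n.descFactorial b₀ : ℕ) : k) ≠ 0 := by
        have : n.descFactorial b₀ ≠ 0 := by
          rw [Ne, Nat.descFactorial_eq_zero_iff_lt]
          omega
        exact_mod_cast this
      exact (mul_eq_zero.mp e5).resolve_right hd
    case side =>
      rintro ⟨a, b⟩ hp hne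
      have hb : b < n := hbn _ hp
      rw [MvPolynomial.coeff_smul, MvPolynomial.coeff_monomial, if_neg, smul_zero]
      intro hcontra
      apply hne
      have h1 := DFunLike.congr_fun hcontra (1 : Fin 2)
      have h0 := DFunLike.congr_fun hcontra (0 : Fin 2)
      simp [Finsupp.single_apply, Finsupp.add_apply, show (0 : Fin 2) ≠ 1 from by decide,
        show (1 : Fin 2) ≠ 0 from by decide] at h1 h0
      exact Prod.ext h1 (by omega)
  · exact Finsupp.notMem_support_iff.mp hab

end JP
namespace JP
variable (k : Type) [Field k]
local notation "R" => JordanPlane k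
local notation "X" => jx k
local notation "Y" => jy k

/-- span of a set of monomials -/
noncomputable def W (P : ℕ × ℕ → Prop) : Submodule k R := Submodule.span k (B k '' {p | P p})

theorem B_mem_W {P : ℕ × ℕ → Prop} {p : ℕ × ℕ} (hp : P p) : B k p ∈ W k P :=
  Submodule.subset_span ⟨p, hp, rfl⟩

theorem W_mono {P Q : ℕ × ℕ → Prop} (h : ∀ p, P p → Q p) : W k P ≤ W k Q :=
  Submodule.span_mono (Set.image_mono h)

theorem W_push (f : JordanPlane k →ₗ[k] JordanPlane k) {P Q : ℕ × ℕ → Prop}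
    (h : ∀ p, P p → f (B k p) ∈ W k Q) : ∀ r ∈ W k P, f r ∈ W k Q := by
  intro r hr
  induction hr using Submodule.span_induction with
  | mem z hz => obtain ⟨p, hp, rfl⟩ := hz; exact h p hp
  | zero => rw [map_zero]; exact (W k Q).zero_mem
  | add u v _ _ hu hv => rw [map_add]; exact (W k Q).add_mem hu hv
  | smul a u _ hu => rw [map_smul]; exact (W k Q).smul_mem a hu

theorem Ymul_W {P Q : ℕ × ℕ → Prop} (h : ∀ p, P p → Q (p.1 + 1, p.2)) :
    ∀ r ∈ W k P, Y * r ∈ W k Q := by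
  apply W_push k (LinearMap.mulLeft k Y)
  intro p hp
  obtain ⟨a, b⟩ := p
  rw [LinearMap.mulLeft_apply, Y_mul_B]
  exact B_mem_W k (h _ hp)

theorem Xmul_W {P Q : ℕ × ℕ → Prop}
    (h : ∀ p, P p → Q (p.1, p.2 + 1) ∧ Q (p.1 + 1, p.2)) :
    ∀ r ∈ W k P, X * r ∈ W k Q := by
  apply W_push k (LinearMap.mulLeft k X)
  intro p hp
  obtain ⟨a, b⟩ := p
  rw [LinearMap.mulLeft_apply, X_mul_B]
  exact (W k Q).add_mem (B_mem_W k (h _ hp).1) ((W k Q).smul_mem _ (B_mem_W k (h _ hp).2))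

theorem mulX_W {P Q : ℕ × ℕ → Prop} (h : ∀ p, P p → Q (p.1, p.2 + 1)) :
    ∀ r ∈ W k P, r * X ∈ W k Q := by
  apply W_push k (LinearMap.mulRight k X)
  intro p hp
  obtain ⟨a, b⟩ := p
  have : B k (a, b) * X = B k (a, b + 1) := by rw [B, B, mul_assoc, ← pow_succ]
  rw [LinearMap.mulRight_apply, this]
  exact B_mem_W k (h _ hp)

/-- qualitative commutation : `X^b Y^c = Y^c X^b + (lower x-degree, same total degree)` -/
theorem powX_powY (b c : ℕ) : ∃ r ∈ W k (fun p => p.1 + p.2 = b + c ∧ p.2 < b),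
    X ^ b * Y ^ c = B k (c, b) + r := by
  induction b with
  | zero =>
    refine ⟨0, (W k _).zero_mem, ?_⟩
    rw [B]
    simp
  | succ b ih =>
    obtain ⟨r, hr, hb⟩ := ih
    refine ⟨(c : k) • B k (c + 1, b) + X * r, ?_, ?_⟩
    · refine (W k _).add_mem ((W k _).smul_mem _ (B_mem_W k ⟨by omega, by omega⟩)) ?_
      exact Xmul_W k (fun p hp => ⟨⟨by omega, by omega⟩, ⟨by omega, by omega⟩⟩) r hr
    · have : X ^ (b+1) * Y ^ c = X * (X ^ b * Y ^ c) := by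
        rw [pow_succ', mul_assoc]
      rw [this, hb, mul_add, B, ← mul_assoc, commX_powY, add_mul, smul_mul_assoc,
        mul_assoc, ← pow_succ', B, B]
      rw [show Y ^ (c+1) * X ^ b = B k (c+1, b) from rfl]
      abel

/-- qualitative multiplication on monomials -/
theorem B_mul_B (a b c d : ℕ) :
    ∃ r ∈ W k (fun p => p.1 + p.2 = a + b + c + d ∧ p.2 < b + d),
      B k (a, b) * B k (c, d) = B k (a + c, b + d) + r := by
  obtain ⟨r, hr, hb⟩ := powX_powY k b c
  refine ⟨Y ^ a * r * X ^ d, ?_, ?_⟩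
  · have h1 : Y ^ a * r ∈ W k (fun p => p.1 + p.2 = a + b + c ∧ p.2 < b) := by
      clear hb
      induction a with
      | zero => simpa using W_mono k (fun p hp => ⟨by omega, hp.2⟩) hr
      | succ a iha =>
        have : Y ^ (a+1) * r = Y * (Y ^ a * r) := by rw [pow_succ', mul_assoc]
        rw [this]
        exact Ymul_W k (fun p hp => ⟨by omega, hp.2⟩) _ iha
    clear hb
    induction d with
    | zero => simpa using W_mono k (fun p hp => ⟨by omega, by omega⟩) h1
    | succ d ihd =>
      have : Y ^ a * r * X ^ (d+1) = (Y ^ a * r * X ^ d) * X := by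
        rw [mul_assoc (Y ^ a * r), ← pow_succ]
      rw [this]
      exact mulX_W k (fun p hp => ⟨by omega, by omega⟩) _ ihd
  · rw [B, B, B, show Y ^ a * X ^ b * (Y ^ c * X ^ d) = Y ^ a * (X ^ b * Y ^ c) * X ^ d by
      noncomm_ring, hb, mul_add, add_mul, B]
    rw [show Y ^ a * (Y ^ c * X ^ b) * X ^ d = Y ^ (a+c) * X ^ (b+d) by
      rw [← mul_assoc, ← pow_add, mul_assoc, ← pow_add]]

end JP
namespace JP
variable (k : Type) [Field k] [CharZero k]
local notation "R" => JordanPlane k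
local notation "X" => jx k
local notation "Y" => jy k

noncomputable def bas : Module.Basis (ℕ × ℕ) k (JordanPlane k) :=
  Module.Basis.mk (linearIndependent_B k) (le_of_eq (span_B_top k).symm)

@[simp] theorem bas_apply (p : ℕ × ℕ) : bas k p = B k p := Module.Basis.mk_apply _ _ _

theorem repr_B (p q : ℕ × ℕ) :
    (bas k).repr (B k p) q = if p = q then 1 else 0 := by
  rw [← bas_apply, (bas k).repr_self]
  exact Finsupp.single_apply

theorem repr_W {P : ℕ × ℕ → Prop} {idx : ℕ × ℕ} (h : ∀ p, P p → p ≠ idx) :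
    ∀ r ∈ W k P, (bas k).repr r idx = 0 := by
  intro r hr
  induction hr using Submodule.span_induction with
  | mem z hz =>
    obtain ⟨p, hp, rfl⟩ := hz
    rw [repr_B, if_neg (h p hp)]
  | zero => simp
  | add u v _ _ hu hv => rw [map_add, Finsupp.add_apply, hu, hv, add_zero]
  | smul a u _ hu => rw [map_smul, Finsupp.smul_apply, hu, smul_zero]

theorem one_eq_B : (1 : R) = B k (0, 0) := by simp [B]
theorem X_eq_B : X = B k (0, 1) := by simp [B]
theorem Y_eq_B : Y = B k (1, 0) := by simp [B]
theorem Ysq_eq_B : Y * Y = B k (2, 0) := by simp [B, sq, pow_succ]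

theorem one_ne_zero' : (1 : R) ≠ 0 := by
  rw [one_eq_B]
  exact (linearIndependent_B k).ne_zero (0, 0)

/-- existence of a (deg, xdeg)-lex-leading index -/
theorem exists_lead (c : (ℕ × ℕ) →₀ k) (hc : c.support.Nonempty) :
    ∃ ps ∈ c.support, ∀ p ∈ c.support,
      p.1 + p.2 ≤ ps.1 + ps.2 ∧ (p.1 + p.2 = ps.1 + ps.2 → p.2 ≤ ps.2) := by
  classical
  set M := c.support.sup (fun p => p.1 + p.2) with hM
  have hfil : (c.support.filter (fun p => p.1 + p.2 = M)).Nonempty := by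
    obtain ⟨p, hp, hpM⟩ := Finset.exists_mem_eq_sup c.support hc (fun p => p.1 + p.2)
    exact ⟨p, Finset.mem_filter.mpr ⟨hp, hpM.symm⟩⟩
  obtain ⟨ps, hpsfil, hβ⟩ := Finset.exists_mem_eq_sup _ hfil Prod.snd
  obtain ⟨hps, hpsM⟩ := Finset.mem_filter.mp hpsfil
  refine ⟨ps, hps, fun p hp => ⟨?_, fun hsum => ?_⟩⟩
  · rw [hpsM]; exact Finset.le_sup (f := fun p => p.1 + p.2) hp
  · have : p ∈ c.support.filter (fun p => p.1 + p.2 = M) :=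
      Finset.mem_filter.mpr ⟨hp, by omega⟩
    have := Finset.le_sup (f := Prod.snd) this
    omega

/-- leading coefficient of a product is the product of leading coefficients -/
theorem repr_mul_lead {s t : R} {ps pt : ℕ × ℕ}
    (hs : ∀ p ∈ ((bas k).repr s).support,
      p.1 + p.2 ≤ ps.1 + ps.2 ∧ (p.1 + p.2 = ps.1 + ps.2 → p.2 ≤ ps.2))
    (ht : ∀ q ∈ ((bas k).repr t).support,
      q.1 + q.2 ≤ pt.1 + pt.2 ∧ (q.1 + q.2 = pt.1 + pt.2 → q.2 ≤ pt.2)) :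
    (bas k).repr (s * t) (ps.1 + pt.1, ps.2 + pt.2)
      = (bas k).repr s ps * (bas k).repr t pt := by
  classical
  set cs := (bas k).repr s with hcs
  set ct := (bas k).repr t with hct
  set idx : ℕ × ℕ := (ps.1 + pt.1, ps.2 + pt.2) with hidx
  have hsrepr : s = ∑ p ∈ cs.support, cs p • B k p := by
    conv_lhs => rw [← (bas k).linearCombination_repr s]
    rw [Finsupp.linearCombination_apply, Finsupp.sum]
    exact Finset.sum_congr rfl (fun p _ => by rw [bas_apply])
  have htrepr : t = ∑ q ∈ ct.support, ct q • B k q := by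
    conv_lhs => rw [← (bas k).linearCombination_repr t]
    rw [Finsupp.linearCombination_apply, Finsupp.sum]
    exact Finset.sum_congr rfl (fun q _ => by rw [bas_apply])
  have hmul : s * t = ∑ p ∈ cs.support, ∑ q ∈ ct.support,
      (cs p * ct q) • (B k p * B k q) := by
    rw [hsrepr, htrepr, Finset.sum_mul]
    refine Finset.sum_congr rfl (fun p _ => ?_)
    rw [Finset.mul_sum]
    refine Finset.sum_congr rfl (fun q _ => ?_)
    rw [smul_mul_assoc, mul_smul_comm, smul_smul]
  have hterm : ∀ p ∈ cs.support, ∀ q ∈ ct.support,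
      (bas k).repr (B k p * B k q) idx = if p = ps ∧ q = pt then 1 else 0 := by
    rintro ⟨a, b⟩ hp ⟨c, d⟩ hq
    obtain ⟨r, hrW, hBB⟩ := B_mul_B k a b c d
    rw [hBB, map_add, Finsupp.add_apply, repr_B]
    have hps' := hs _ hp
    have hpt' := ht _ hq
    simp only at hps' hpt'
    have hr0 : (bas k).repr r idx = 0 := by
      refine repr_W k (fun u hu => ?_) r hrW
      obtain ⟨husum, hult⟩ := hu
      intro hcontra
      rw [hcontra, hidx] at husum hult
      simp only at husum hult
      omega
    rw [hr0, add_zero]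
    congr 1
    simp only [hidx, Prod.mk.injEq, Prod.ext_iff, eq_iff_iff]
    constructor
    · rintro ⟨h1, h2⟩
      omega
    · rintro ⟨⟨e1, e2⟩, ⟨e3, e4⟩⟩
      omega
  have : (bas k).repr (s * t) idx
      = ∑ p ∈ cs.support, ∑ q ∈ ct.support,
        (cs p * ct q) * (if p = ps ∧ q = pt then 1 else 0) := by
    rw [hmul, map_sum, Finsupp.finset_sum_apply]
    refine Finset.sum_congr rfl (fun p hp => ?_)
    rw [map_sum, Finsupp.finset_sum_apply]
    refine Finset.sum_congr rfl (fun q hq => ?_)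
    rw [map_smul, Finsupp.smul_apply, smul_eq_mul, hterm p hp q hq]
  rw [this]
  by_cases hmem : ps ∈ cs.support
  · rw [Finset.sum_eq_single_of_mem ps hmem]
    · by_cases hmem' : pt ∈ ct.support
      · rw [Finset.sum_eq_single_of_mem pt hmem']
        · simp
        · intro q _ hne
          rw [if_neg (show ¬(ps = ps ∧ q = pt) from fun hx => hne hx.2), mul_zero]
      · rw [Finset.sum_eq_zero, Finsupp.notMem_support_iff.mp hmem', mul_zero]
        intro q hq
        rw [if_neg (show ¬(ps = ps ∧ q = pt) from fun hx => hmem' (hx.2 ▸ hq)), mul_zero]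
    · intro p _ hne
      rw [Finset.sum_eq_zero]
      intro q _
      rw [if_neg (show ¬(p = ps ∧ q = pt) from fun hx => hne hx.1), mul_zero]
  · rw [Finset.sum_eq_zero, Finsupp.notMem_support_iff.mp hmem, zero_mul]
    intro p hp
    rw [Finset.sum_eq_zero]
    intro q _
    rw [if_neg (show ¬(p = ps ∧ q = pt) from fun hx => hmem (hx.1 ▸ hp)), mul_zero]

/-- units of the Jordan plane are nonzero scalars -/
theorem eq_scalar_of_mul_eq_one {s t : R} (h : s * t = 1) :
    ∃ α : k, α ≠ 0 ∧ s = algebraMap k (JordanPlane k) α := by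
  classical
  have hs : s ≠ 0 := by
    rintro rfl
    exact one_ne_zero' k (by rw [← h, zero_mul])
  have ht : t ≠ 0 := by
    rintro rfl
    exact one_ne_zero' k (by rw [← h, mul_zero])
  have hcs : ((bas k).repr s).support.Nonempty := by
    rw [Finsupp.support_nonempty_iff]
    exact fun e => hs ((bas k).repr.map_eq_zero_iff.mp e)
  have hct : ((bas k).repr t).support.Nonempty := by
    rw [Finsupp.support_nonempty_iff]
    exact fun e => ht ((bas k).repr.map_eq_zero_iff.mp e)
  obtain ⟨ps, hps, hslead⟩ := exists_lead k _ hcs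
  obtain ⟨pt, hpt, htlead⟩ := exists_lead k _ hct
  have hprod := repr_mul_lead k hslead htlead
  rw [h] at hprod
  have hne : (bas k).repr s ps * (bas k).repr t pt ≠ 0 :=
    mul_ne_zero (Finsupp.mem_support_iff.mp hps) (Finsupp.mem_support_iff.mp hpt)
  rw [one_eq_B, repr_B] at hprod
  have hidx0 : ps = (0, 0) ∧ pt = (0, 0) := by
    by_contra hcon
    rw [if_neg] at hprod
    · exact hne hprod.symm
    · intro he
      have h1 := congrArg Prod.fst he
      have h2 := congrArg Prod.snd he
      simp only at h1 h2
      apply hcon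
      constructor <;> (apply Prod.ext <;> omega)
  -- all of s's support is at (0,0)
  have hsupp : ∀ p ∈ ((bas k).repr s).support, p = (0, 0) := by
    intro p hp
    have := (hslead p hp).1
    rw [hidx0.1] at this
    simp only at this
    apply Prod.ext <;> omega
  set α := (bas k).repr s (0, 0) with hα
  refine ⟨α, ?_, ?_⟩
  · rw [hα, ← hidx0.1]
    exact Finsupp.mem_support_iff.mp hps
  · have hrepr : (bas k).repr s = Finsupp.single (0, 0) α := by
      ext q
      rw [Finsupp.single_apply]
      by_cases hq : q = (0, 0)
      · rw [hq, if_pos rfl]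
      · rw [if_neg (fun e => hq e.symm)]
        by_cases hq2 : q ∈ ((bas k).repr s).support
        · exact absurd (hsupp q hq2) hq
        · exact Finsupp.notMem_support_iff.mp hq2
    have := congrArg ((bas k).repr.symm) hrepr
    rw [LinearEquiv.symm_apply_apply] at this
    rw [Algebra.algebraMap_eq_smul_one, this, Module.Basis.repr_symm_apply,
      Finsupp.linearCombination_single, bas_apply, ← one_eq_B]

end JP
namespace JP
variable (k : Type) [Field k] [CharZero k]
local notation "R" => JordanPlane k
local notation "X" => jx k
local notation "Y" => jy k

theorem repr_sum (r : R) : r = ∑ p ∈ ((bas k).repr r).support, (bas k).repr r p • B k p := by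
  conv_lhs => rw [← (bas k).linearCombination_repr r]
  rw [Finsupp.linearCombination_apply, Finsupp.sum]
  exact Finset.sum_congr rfl (fun p _ => by rw [bas_apply])

theorem repr_finsum {ι : Type*} {s : Finset ι} (f : ι → R) (idx : ℕ × ℕ) :
    (bas k).repr (∑ i ∈ s, f i) idx = ∑ i ∈ s, (bas k).repr (f i) idx := by
  rw [map_sum, Finsupp.finset_sum_apply]

theorem repr_smul (c : k) (r : R) (idx : ℕ × ℕ) :
    (bas k).repr (c • r) idx = c * (bas k).repr r idx := by
  rw [map_smul, Finsupp.smul_apply, smul_eq_mul]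

theorem Ymul_cancel {u v : R} (h : Y * u = Y * v) : u = v := by
  classical
  have hw : Y * (u - v) = 0 := by rw [mul_sub, h, sub_self]
  have hinj : Function.Injective (fun p : ℕ × ℕ => (p.1 + 1, p.2)) := by
    rintro ⟨a, b⟩ ⟨c, d⟩ he
    simp only [Prod.mk.injEq] at he
    exact Prod.ext (by omega) he.2
  have hli := (linearIndependent_B k).comp _ hinj
  have hcomb : Finsupp.linearCombination k ((B k) ∘ (fun p : ℕ × ℕ => (p.1 + 1, p.2)))
      ((bas k).repr (u - v)) = 0 := by
    rw [Finsupp.linearCombination_apply, Finsupp.sum, ← hw]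
    conv_rhs => rw [repr_sum k (u - v), Finset.mul_sum]
    refine Finset.sum_congr rfl (fun p _ => ?_)
    rw [mul_smul_comm]
    obtain ⟨a, b⟩ := p
    rw [Function.comp_apply, Y_mul_B]
  have := linearIndependent_iff.mp hli _ hcomb
  have h0 : u - v = 0 := by
    have h2 := congrArg ((bas k).repr.symm) (this : (bas k).repr (u - v) = 0)
    rw [LinearEquiv.symm_apply_apply, map_zero] at h2
    exact h2
  exact sub_eq_zero.mp h0

/-- the 'abelianization' map to k[x] -/
noncomputable def theta : JordanPlane k →ₐ[k] Polynomial k :=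
  RingQuot.liftAlgHom k ⟨FreeAlgebra.lift k (fun b => if b then Polynomial.X else 0), by
    rintro _ _ ⟨⟩
    simp [map_mul, map_add, FreeAlgebra.lift_ι_apply]⟩

theorem theta_jx : theta k (jx k) = Polynomial.X := by
  rw [jx, theta, RingQuot.liftAlgHom_mkAlgHom_apply, FreeAlgebra.lift_ι_apply]
  simp

theorem theta_jy : theta k (jy k) = 0 := by
  rw [jy, theta, RingQuot.liftAlgHom_mkAlgHom_apply, FreeAlgebra.lift_ι_apply]
  simp

theorem theta_B (a b : ℕ) :
    theta k (B k (a, b)) = if a = 0 then Polynomial.X ^ b else 0 := by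
  rw [B, map_mul, map_pow, map_pow, theta_jx, theta_jy]
  cases a with
  | zero => simp
  | succ a => simp [zero_pow]

theorem mem_yR_of_theta_zero {r : R} (h : theta k r = 0) : ∃ u, r = Y * u := by
  classical
  set c := (bas k).repr r with hc
  have hzero : ∀ b, c (0, b) = 0 := by
    intro b
    by_cases hmem : (0, b) ∈ c.support
    · have hsum : theta k r = ∑ p ∈ c.support, c p • theta k (B k p) := by
        conv_lhs => rw [repr_sum k r, map_sum]
        exact Finset.sum_congr rfl (fun p _ => by rw [map_smul])
      have hco := congrArg (Polynomial.coeff · b) (hsum.symm.trans h)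
      simp only [Polynomial.finset_sum_coeff, Polynomial.coeff_smul,
        Polynomial.coeff_zero] at hco
      rw [Finset.sum_eq_single_of_mem (0, b) hmem] at hco
      · rw [theta_B] at hco
        simpa using hco
      · rintro ⟨a', b'⟩ hp hne
        by_cases ha' : a' = 0
        · subst ha'
          simp only [theta_B, eq_self_iff_true, if_true, Polynomial.coeff_X_pow]
          rw [if_neg (fun e : b = b' => hne (by rw [e])), smul_zero]
        · simp only [theta_B, if_neg ha', Polynomial.coeff_zero, smul_zero]
    · exact Finsupp.notMem_support_iff.mp hmem
  have hfst : ∀ p ∈ c.support, 1 ≤ p.1 := by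
    rintro ⟨a, b⟩ hp
    by_contra hcon
    have : a = 0 := by omega
    subst this
    exact Finsupp.mem_support_iff.mp hp (hzero b)
  refine ⟨∑ p ∈ c.support, c p • B k (p.1 - 1, p.2), ?_⟩
  rw [Finset.mul_sum]
  conv_lhs => rw [repr_sum k r]
  refine Finset.sum_congr rfl (fun p hp => ?_)
  rw [mul_smul_comm]
  obtain ⟨a, b⟩ := p
  have ha := hfst _ hp
  simp only at ha
  rw [Y_mul_B, show a - 1 + 1 = a from by omega]

/-- precise commutator of a power of X with Y -/
theorem powX_Y (b : ℕ) : ∃ w ∈ W k (fun p => p.2 + 2 ≤ b + 1),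
    X ^ (b+1) * Y = Y * X ^ (b+1) + ((b+1 : ℕ) : k) • B k (2, b) + w := by
  induction b with
  | zero =>
    refine ⟨0, (W k _).zero_mem, ?_⟩
    rw [pow_one, rel k]
    rw [show B k (2, 0) = Y * Y by rw [← Ysq_eq_B]]
    push_cast
    rw [one_smul, add_zero]
  | succ b ih =>
    obtain ⟨w, hw, hcomm⟩ := ih
    refine ⟨((2 * (b+1) : ℕ) : k) • B k (3, b) + X * w, ?_, ?_⟩
    · refine (W k _).add_mem ((W k _).smul_mem _ (B_mem_W k (by omega))) ?_
      exact Xmul_W k (fun p hp => ⟨by omega, by omega⟩) w hw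
    · have hstep : X ^ (b+2) * Y = X * (X ^ (b+1) * Y) := by
        rw [← mul_assoc, ← pow_succ']
      rw [hstep, hcomm, mul_add, mul_add, ← mul_assoc, rel k, add_mul, mul_smul_comm,
        X_mul_B]
      have h1 : Y * X * X ^ (b+1) = Y * X ^ (b+2) := by
        rw [mul_assoc, ← pow_succ']
      have h2 : Y * Y * X ^ (b+1) = B k (2, b+1) := by
        rw [B, Ysq_eq_B, B]
        simp
      rw [h1, h2, smul_add]
      simp only [show b + 1 + 1 = b + 2 from by omega]
      match_scalars <;> (push_cast; ring)
end JP
namespace JP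
variable (k : Type) [Field k] [CharZero k]
local notation "R" => JordanPlane k
local notation "X" => jx k
local notation "Y" => jy k

theorem B_a0 (a : ℕ) : B k (a, 0) = Y ^ a := by simp [B]

theorem comm_B_Y0 (a : ℕ) : B k (a, 0) * Y = Y * B k (a, 0) := by
  rw [B_a0, ← pow_succ, ← pow_succ']

theorem powYmul_W (P : ℕ → Prop) (a : ℕ) :
    ∀ r ∈ W k (fun p => P p.2), Y ^ a * r ∈ W k (fun p => P p.2) := by
  induction a with
  | zero => intro r hr; simpa using hr
  | succ a ih =>
    intro r hr
    rw [pow_succ', mul_assoc]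
    exact Ymul_W k (fun p hp => hp) _ (ih r hr)

theorem comm_B_Y (a b : ℕ) : ∃ w ∈ W k (fun p => p.2 + 2 ≤ b + 1),
    B k (a, b+1) * Y = Y * B k (a, b+1) + ((b+1 : ℕ) : k) • B k (a+2, b) + w := by
  obtain ⟨w, hw, hcomm⟩ := powX_Y k b
  refine ⟨Y ^ a * w, powYmul_W k (fun n => n + 2 ≤ b + 1) a w hw, ?_⟩
  have h1 : B k (a, b+1) * Y = Y ^ a * (X ^ (b+1) * Y) := by rw [B, mul_assoc]
  rw [h1, hcomm, mul_add, mul_add, mul_smul_comm]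
  congr 2
  · rw [B, ← mul_assoc, ← mul_assoc, ← pow_succ, ← pow_succ']
  · rw [B, B, ← mul_assoc, ← pow_add]

/-- coordinates of the commutator of a basis monomial with Y -/
theorem repr_comm_B (a b A e : ℕ) (hb : b ≤ e + 1) :
    (bas k).repr (B k (a, b) * Y - Y * B k (a, b)) (A, e)
      = if b = e + 1 ∧ A = a + 2 then ((b : ℕ) : k) else 0 := by
  cases b with
  | zero =>
    rw [comm_B_Y0, sub_self, map_zero]
    rw [if_neg (by omega)]
    rfl
  | succ b =>
    obtain ⟨w, hw, hcomm⟩ := comm_B_Y k a b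
    have : B k (a, b+1) * Y - Y * B k (a, b+1) = ((b+1 : ℕ) : k) • B k (a+2, b) + w := by
      rw [hcomm]; abel
    rw [this, map_add, Finsupp.add_apply, repr_smul, repr_B]
    have hw0 : (bas k).repr w (A, e) = 0 := by
      refine repr_W k (fun u hu => ?_) w hw
      intro hcon
      rw [hcon] at hu
      simp only at hu
      omega
    rw [hw0, add_zero]
    by_cases hcond : b + 1 = e + 1 ∧ A = a + 2
    · rw [if_pos hcond, if_pos (by obtain ⟨h1, h2⟩ := hcond; exact Prod.ext (by omega) (by omega)),
        mul_one]
    · rw [if_neg hcond, if_neg, mul_zero]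
      intro hcon
      have h1 := congrArg Prod.fst hcon
      have h2 := congrArg Prod.snd hcon
      simp only at h1 h2
      exact hcond ⟨by omega, by omega⟩

/-- classification of elements whose commutator with `Y` is `α Y²` -/
theorem commY_classify {r : R} {α : k} (hα : α ≠ 0)
    (h : r * Y - Y * r = α • (Y * Y)) :
    ∃ p : Polynomial k, r = α • X + Polynomial.aeval Y p := by
  classical
  set c := (bas k).repr r with hc
  have hsum : r * Y - Y * r = ∑ p ∈ c.support, c p • (B k p * Y - Y * B k p) := by
    conv_lhs => rw [repr_sum k r]
    rw [Finset.sum_mul, Finset.mul_sum, ← Finset.sum_sub_distrib]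
    exact Finset.sum_congr rfl (fun p _ => by rw [smul_mul_assoc, mul_smul_comm, smul_sub])
  set d := c.support.sup Prod.snd with hd
  have hble : ∀ p ∈ c.support, p.2 ≤ d := fun p hp => Finset.le_sup (f := Prod.snd) hp
  -- master coordinate identity
  have hmaster : ∀ A e : ℕ, (∀ p ∈ c.support, p.2 ≤ e + 1) →
      (∑ p ∈ c.support, c p * (if p.2 = e + 1 ∧ A = p.1 + 2 then ((p.2 : ℕ) : k) else 0))
        = α * (if ((2 : ℕ), (0 : ℕ)) = (A, e) then 1 else 0) := by
    intro A e he
    have h1 := congrArg (fun z => (bas k).repr z (A, e)) (hsum.symm.trans h)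
    rw [repr_finsum] at h1
    rw [repr_smul, Ysq_eq_B, repr_B] at h1
    rw [← h1]
    refine Finset.sum_congr rfl (fun p hp => ?_)
    rw [repr_smul]
    obtain ⟨a, b⟩ := p
    rw [repr_comm_B k a b A e (he _ hp)]
  -- the x-degree is at most 1
  have hd1 : d ≤ 1 := by
    by_contra hcon
    push_neg at hcon
    have hne : c.support.Nonempty := by
      by_contra hemp
      rw [Finset.not_nonempty_iff_eq_empty] at hemp
      rw [hd, hemp] at hcon
      simp at hcon
    obtain ⟨pd, hpd, hpdeq⟩ := Finset.exists_mem_eq_sup c.support hne Prod.snd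
    have hkey := hmaster (pd.1 + 2) (d - 1) (fun p hp => by have := hble p hp; omega)
    rw [Finset.sum_eq_single_of_mem pd hpd] at hkey
    · rw [if_pos ⟨by omega, rfl⟩] at hkey
      rw [if_neg (by intro hcon2; have := congrArg Prod.snd hcon2; simp only at this; omega),
        mul_zero] at hkey
      have : c pd = 0 := by
        have hpd2 : ((pd.2 : ℕ) : k) ≠ 0 := by
          rw [Nat.cast_ne_zero]
          omega
        exact (mul_eq_zero.mp hkey).resolve_right hpd2
      exact Finsupp.mem_support_iff.mp hpd this
    · intro p hp hne2
      have hple := hble p hp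
      by_cases hcond : p.2 = d - 1 + 1 ∧ pd.1 + 2 = p.1 + 2
      · exfalso
        apply hne2
        have : p.2 = d := by omega
        have h2 : p.1 = pd.1 := by omega
        exact Prod.ext h2 (by omega)
      · rw [if_neg hcond, mul_zero]
  -- coefficients in x-degree 1
  have hc1 : ∀ a : ℕ, c (a, 1) = if a = 0 then α else 0 := by
    intro a
    have hkey := hmaster (a + 2) 0 (fun p hp => by have := hble p hp; omega)
    by_cases hmem : (a, 1) ∈ c.support
    · rw [Finset.sum_eq_single_of_mem (a, 1) hmem] at hkey
      · rw [if_pos ⟨rfl, rfl⟩, Nat.cast_one, mul_one] at hkey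
        rw [hkey]
        by_cases ha : a = 0
        · subst ha; rw [if_pos rfl, if_pos rfl, mul_one]
        · have hne3 : ((2:ℕ), (0:ℕ)) ≠ (a + 2, 0) := by
            intro hcon
            have := congrArg Prod.fst hcon
            simp only at this
            omega
          rw [if_neg ha, if_neg hne3, mul_zero]
      · intro p hp hne2
        by_cases hcond : p.2 = 0 + 1 ∧ a + 2 = p.1 + 2
        · exact absurd (Prod.ext (by omega) (by omega) : p = (a, 1)) hne2
        · rw [if_neg hcond, mul_zero]
    · rw [Finsupp.notMem_support_iff.mp hmem]
      rw [Finset.sum_eq_zero] at hkey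
      · by_cases ha : a = 0
        · subst ha
          rw [if_pos rfl, mul_one] at hkey
          rw [if_pos rfl]
          exact hkey
        · rw [if_neg ha]
      · intro p hp
        by_cases hcond : p.2 = 0 + 1 ∧ a + 2 = p.1 + 2
        · exfalso
          have : p = (a, 1) := Prod.ext (by omega) (by omega)
          rw [this] at hp
          exact hmem hp
        · rw [if_neg hcond, mul_zero]
  -- assemble the polynomial part
  refine ⟨∑ q ∈ c.support.filter (fun q => q.2 = 0), Polynomial.C (c q) * Polynomial.X ^ q.1, ?_⟩
  have haeval : Polynomial.aeval Y
      (∑ q ∈ c.support.filter (fun q => q.2 = 0), Polynomial.C (c q) * Polynomial.X ^ q.1)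
      = ∑ q ∈ c.support.filter (fun q => q.2 = 0), c q • B k q := by
    rw [map_sum]
    refine Finset.sum_congr rfl (fun q hq => ?_)
    have hq2 : q.2 = 0 := (Finset.mem_filter.mp hq).2
    rw [map_mul, Polynomial.aeval_C, map_pow, Polynomial.aeval_X, ← Algebra.smul_def]
    rw [show q = (q.1, 0) from Prod.ext rfl hq2, B_a0]
  have hr : r = (∑ q ∈ c.support.filter (fun q => q.2 = 0), c q • B k q)
      + (∑ q ∈ c.support.filter (fun q => ¬ q.2 = 0), c q • B k q) := by
    rw [Finset.sum_filter_add_sum_filter_not c.support (fun q => q.2 = 0)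
      (fun q => c q • B k q)]
    exact repr_sum k r
  have hmem01 : ((0:ℕ), (1:ℕ)) ∈ c.support.filter (fun q => ¬ q.2 = 0) := by
    refine Finset.mem_filter.mpr ⟨?_, by simp⟩
    rw [Finsupp.mem_support_iff, hc1 0, if_pos rfl]
    exact hα
  have hsecond : (∑ q ∈ c.support.filter (fun q => ¬ q.2 = 0), c q • B k q) = α • X := by
    rw [Finset.sum_eq_single_of_mem ((0:ℕ), (1:ℕ)) hmem01]
    · rw [hc1 0, if_pos rfl, ← X_eq_B]
    · rintro ⟨a, b⟩ hq hne
      obtain ⟨hqs, hqnz⟩ := Finset.mem_filter.mp hq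
      have h2 : b ≤ d := hble (a, b) hqs
      simp only at hqnz
      have hb1 : b = 1 := by omega
      subst hb1
      have ha : a ≠ 0 := fun e => hne (by rw [e])
      rw [hc1 a, if_neg ha, zero_smul]
  rw [hr, hsecond, haeval]
  exact add_comm _ _

end JP
namespace JP
variable (k : Type) [Field k] [CharZero k]
local notation "R" => JordanPlane k
local notation "X" => jx k
local notation "Y" => jy k

theorem Ysq_comm : Y * Y = X * Y - Y * X := by rw [rel k]; abel

/-- Part A : classification of automorphisms -/
theorem classify (φ : JordanPlane k ≃ₐ[k] JordanPlane k) :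
    ∃ α : k, α ≠ 0 ∧ ∃ p : Polynomial k,
      φ X = algebraMap k (JordanPlane k) α * X + Polynomial.aeval Y p ∧
      φ Y = algebraMap k (JordanPlane k) α * Y := by
  classical
  -- θ∘φ kills Y for any automorphism φ
  have hkill : ∀ ψ : JordanPlane k ≃ₐ[k] JordanPlane k, theta k (ψ Y) = 0 := by
    intro ψ
    have hsq : theta k (ψ Y) * theta k (ψ Y) = 0 :=
      calc theta k (ψ Y) * theta k (ψ Y) = theta k (ψ (Y * Y)) := by rw [map_mul, map_mul]
        _ = theta k (ψ (X * Y)) - theta k (ψ (Y * X)) := by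
            rw [Ysq_comm k, map_sub, map_sub]
        _ = theta k (ψ X) * theta k (ψ Y) - theta k (ψ Y) * theta k (ψ X) := by
            rw [map_mul, map_mul, map_mul, map_mul]
        _ = 0 := by rw [mul_comm, sub_self]
    exact mul_self_eq_zero.mp hsq
  obtain ⟨u, hu⟩ := mem_yR_of_theta_zero k (hkill φ)
  obtain ⟨v, hv⟩ := mem_yR_of_theta_zero k (hkill φ.symm)
  -- u is invertible
  have huv : u * φ v = 1 := by
    have h1 : Y * (u * φ v) = Y * 1 := by
      rw [mul_one, ← mul_assoc, ← hu, ← map_mul, ← hv, AlgEquiv.apply_symm_apply]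
    exact Ymul_cancel k h1
  have hvu : φ v * u = 1 := by
    have h1 : v * φ.symm u = 1 := by
      have h2 : Y * (v * φ.symm u) = Y * 1 := by
        rw [mul_one, ← mul_assoc, ← hv, ← map_mul, ← hu, AlgEquiv.symm_apply_apply]
      exact Ymul_cancel k h2
    have := congrArg φ h1
    rw [map_mul, AlgEquiv.apply_symm_apply, map_one] at this
    exact this
  obtain ⟨α, hα, hscalar⟩ := eq_scalar_of_mul_eq_one k huv
  have hφY : φ Y = algebraMap k (JordanPlane k) α * Y := by
    rw [hu, hscalar, ← Algebra.commutes]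
  -- commutator equation for φ X
  have hcommrel : φ X * φ Y = φ Y * φ X + φ Y * φ Y := by
    rw [← map_mul, ← map_mul, ← map_mul, ← map_add, rel k]
  have hsmul : φ Y = α • Y := by rw [hφY, Algebra.smul_def]
  rw [hsmul] at hcommrel
  have hcomm3 : φ X * Y - Y * φ X = α • (Y * Y) := by
    apply smul_right_injective (JordanPlane k) hα
    show α • (φ X * Y - Y * φ X) = α • (α • (Y * Y))
    rw [smul_sub, ← mul_smul_comm, ← smul_mul_assoc, hcommrel, add_sub_cancel_left,
      smul_mul_assoc, mul_smul_comm]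
  obtain ⟨p, hp⟩ := commY_classify k hα hcomm3
  exact ⟨α, hα, p, by rw [hp, Algebra.smul_def], hφY⟩

end JP
namespace JP
open Polynomial
variable (k : Type) [Field k] [CharZero k]
local notation "R" => JordanPlane k
local notation "X" => jx k
local notation "Y" => jy k

theorem Y_ne_zero : Y ≠ 0 := by
  rw [Y_eq_B]
  exact (linearIndependent_B k).ne_zero (1, 0)

theorem aeval_Y_comm (p : Polynomial k) :
    Polynomial.aeval Y p * Y = Y * Polynomial.aeval Y p := by
  induction p using Polynomial.induction_on' with
  | add p q hp hq => rw [map_add, add_mul, mul_add, hp, hq]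
  | monomial n a =>
    rw [Polynomial.aeval_monomial, ← Algebra.smul_def, smul_mul_assoc, mul_smul_comm,
      ← pow_succ, ← pow_succ']

theorem aeval_Y_eq_zero {p : Polynomial k} (h : Polynomial.aeval Y p = 0) : p = 0 := by
  classical
  have hf : Function.Injective (fun a : ℕ => ((a, 0) : ℕ × ℕ)) := by
    intro a b hab
    simpa using congrArg Prod.fst hab
  have hli := (linearIndependent_B k).comp _ hf
  have hsum : ∑ a ∈ p.support, p.coeff a • (B k ∘ fun a : ℕ => ((a, 0) : ℕ × ℕ)) a = 0 := by
    rw [← h]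
    conv_rhs => rw [p.as_sum_support]
    rw [map_sum]
    refine (Finset.sum_congr rfl (fun a _ => ?_)).symm
    rw [Polynomial.aeval_monomial, ← Algebra.smul_def, Function.comp_apply, B_a0]
  have hcoeff := linearIndependent_iff'.mp hli p.support (fun a => p.coeff a) hsum
  ext a
  simp only [Polynomial.coeff_zero]
  by_cases ha : a ∈ p.support
  · exact hcoeff a ha
  · exact Polynomial.notMem_support_iff.mp ha

/-- the endomorphism `x ↦ αx + p(y), y ↦ αy` -/
noncomputable def F (α : k) (p : Polynomial k) : JordanPlane k →ₐ[k] JordanPlane k :=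
  RingQuot.liftAlgHom k ⟨FreeAlgebra.lift k
    (fun b => if b then α • X + Polynomial.aeval Y p else α • Y), by
    rintro _ _ ⟨⟩
    simp only [map_mul, map_add, FreeAlgebra.lift_ι_apply, if_true, if_false]
    show (α • X + Polynomial.aeval Y p) * (α • Y)
      = α • Y * (α • X + Polynomial.aeval Y p) + α • Y * (α • Y)
    simp only [add_mul, mul_add, smul_mul_assoc, mul_smul_comm]
    rw [rel k, aeval_Y_comm k]
    simp only [smul_add]
    abel⟩

theorem F_jx (α : k) (p : Polynomial k) : F k α p X = α • X + Polynomial.aeval Y p := by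
  rw [jx, F, RingQuot.liftAlgHom_mkAlgHom_apply, FreeAlgebra.lift_ι_apply]
  simp [jx, jy]

theorem F_jy (α : k) (p : Polynomial k) : F k α p Y = α • Y := by
  rw [jy, F, RingQuot.liftAlgHom_mkAlgHom_apply, FreeAlgebra.lift_ι_apply]
  simp [jx, jy]

theorem F_comp (α β : k) (p q : Polynomial k) :
    (F k α p).comp (F k β q)
      = F k (α * β) (β • p + q.comp (Polynomial.C α * Polynomial.X)) := by
  have haeval : ∀ s : Polynomial k, F k α p (Polynomial.aeval Y s)
      = Polynomial.aeval ((α : k) • Y) s := by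
    intro s
    rw [← Polynomial.aeval_algHom_apply (F k α p) Y s, F_jy]
  apply algHom_ext
  · rw [AlgHom.comp_apply, F_jx, F_jx, map_add, map_smul, F_jx, haeval]
    rw [map_add, Polynomial.aeval_comp, map_mul, Polynomial.aeval_C, Polynomial.aeval_X,
      ← Algebra.smul_def, map_smul]
    rw [smul_add, smul_smul, mul_comm β α]
    abel
  · rw [AlgHom.comp_apply, F_jy, F_jy, map_smul, F_jy, smul_smul, mul_comm β α]

theorem F_id : F k 1 0 = AlgHom.id k (JordanPlane k) := by
  apply algHom_ext
  · rw [F_jx, map_zero, add_zero, one_smul, AlgHom.id_apply]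
  · rw [F_jy, one_smul, AlgHom.id_apply]

theorem comp_CX_CXinv (α : k) (hα : α ≠ 0) (p : Polynomial k) :
    (p.comp (Polynomial.C α⁻¹ * Polynomial.X)).comp (Polynomial.C α * Polynomial.X) = p := by
  rw [Polynomial.comp_assoc, Polynomial.mul_comp, Polynomial.C_comp, Polynomial.X_comp,
    ← mul_assoc, ← Polynomial.C_mul, inv_mul_cancel₀ hα, Polynomial.C_1, one_mul,
    Polynomial.comp_X]

/-- the automorphism `x ↦ αx + p(y), y ↦ αy` -/
noncomputable def psi (α : kˣ) (p : Polynomial k) : JordanPlane k ≃ₐ[k] JordanPlane k :=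
  AlgEquiv.ofAlgHom (F k (α : k) p)
    (F k ((α : k)⁻¹) (-(((α : k)⁻¹) • p.comp (Polynomial.C ((α : k)⁻¹) * Polynomial.X))))
    (by
      rw [F_comp, mul_inv_cancel₀ (Units.ne_zero α)]
      rw [Polynomial.neg_comp, Polynomial.smul_comp, comp_CX_CXinv k _ (Units.ne_zero α)]
      rw [add_neg_cancel, F_id])
    (by
      rw [F_comp, inv_mul_cancel₀ (Units.ne_zero α)]
      rw [smul_neg, smul_smul, mul_inv_cancel₀ (Units.ne_zero α), one_smul]
      rw [neg_add_cancel, F_id])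

theorem psi_apply (α : kˣ) (p : Polynomial k) (r : JordanPlane k) :
    psi k α p r = F k (α : k) p r := rfl

theorem equiv_ext (f g : JordanPlane k ≃ₐ[k] JordanPlane k)
    (hx : f X = g X) (hy : f Y = g Y) : f = g := by
  have h := algHom_ext k f.toAlgHom g.toAlgHom hx hy
  exact AlgEquiv.ext (fun r => AlgHom.congr_fun h r)

theorem psi_mul (α β : kˣ) (p q : Polynomial k) :
    psi k α p * psi k β q
      = psi k (α * β) ((β : k) • p + q.comp (Polynomial.C (α : k) * Polynomial.X)) := by
  apply equiv_ext
  · rw [AlgEquiv.mul_apply, psi_apply, psi_apply, psi_apply, ← AlgHom.comp_apply, F_comp,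
      Units.val_mul]
  · rw [AlgEquiv.mul_apply, psi_apply, psi_apply, psi_apply, ← AlgHom.comp_apply, F_comp,
      Units.val_mul]

/-- the action of `kˣ` on polynomials -/
noncomputable def act : kˣ →* MulAut (Multiplicative (Polynomial k)) where
  toFun α :=
    { toFun := fun x => Multiplicative.ofAdd
        (((α : k))⁻¹ • (Multiplicative.toAdd x).comp (Polynomial.C (α : k) * Polynomial.X))
      invFun := fun x => Multiplicative.ofAdd
        ((α : k) • (Multiplicative.toAdd x).comp (Polynomial.C ((α : k))⁻¹ * Polynomial.X))
      left_inv := by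
        intro x
        simp only [toAdd_ofAdd, Polynomial.smul_comp]
        rw [smul_smul, mul_inv_cancel₀ (Units.ne_zero α), one_smul,
          Polynomial.comp_assoc, Polynomial.mul_comp, Polynomial.C_comp, Polynomial.X_comp,
          ← mul_assoc, ← Polynomial.C_mul, mul_inv_cancel₀ (Units.ne_zero α), Polynomial.C_1,
          one_mul, Polynomial.comp_X, ofAdd_toAdd]
      right_inv := by
        intro x
        simp only [toAdd_ofAdd, Polynomial.smul_comp]
        rw [smul_smul, inv_mul_cancel₀ (Units.ne_zero α), one_smul,
          Polynomial.comp_assoc, Polynomial.mul_comp, Polynomial.C_comp, Polynomial.X_comp,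
          ← mul_assoc, ← Polynomial.C_mul, inv_mul_cancel₀ (Units.ne_zero α), Polynomial.C_1,
          one_mul, Polynomial.comp_X, ofAdd_toAdd]
      map_mul' := by
        intro x y
        simp only [toAdd_mul, Polynomial.add_comp, smul_add,
          ofAdd_add] }
  map_one' := by
    apply MulEquiv.ext
    intro x
    simp only [MulEquiv.coe_mk, Equiv.coe_fn_mk, Units.val_one, inv_one, one_smul,
      Polynomial.C_1, one_mul, Polynomial.comp_X, ofAdd_toAdd]
    rfl
  map_mul' := by
    intro α β
    apply MulEquiv.ext
    intro x
    rw [MulAut.mul_apply]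
    simp only [MulEquiv.coe_mk, Equiv.coe_fn_mk, toAdd_ofAdd,
      Polynomial.smul_comp, Units.val_mul]
    rw [smul_smul, Polynomial.comp_assoc, Polynomial.mul_comp, Polynomial.C_comp,
      Polynomial.X_comp]
    congr 2
    · rw [mul_inv_rev, mul_comm]
    · rw [← mul_assoc, ← Polynomial.C_mul, mul_comm (β : k) (α : k)]

end JP
namespace JP
open Polynomial
variable (k : Type) [Field k] [CharZero k]
local notation "R" => JordanPlane k
local notation "X" => jx k
local notation "Y" => jy k

/-- the isomorphism from the semidirect product to the automorphism group -/
noncomputable def Phi : (Multiplicative (Polynomial k) ⋊[act k] kˣ) →*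
    (JordanPlane k ≃ₐ[k] JordanPlane k) :=
  MonoidHom.mk' (fun g => psi k g.right ((g.right : k) • Multiplicative.toAdd g.left)) (by
    intro g₁ g₂
    rw [psi_mul]
    have hright : (g₁ * g₂).right = g₁.right * g₂.right := rfl
    have hleft : (g₁ * g₂).left = g₁.left * (act k g₁.right) g₂.left := rfl
    rw [hright, hleft]
    congr 1
    rw [toAdd_mul]
    have hact : Multiplicative.toAdd ((act k g₁.right) g₂.left)
        = ((g₁.right : k))⁻¹ • (Multiplicative.toAdd g₂.left).comp
            (Polynomial.C (g₁.right : k) * Polynomial.X) := rfl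
    rw [hact, Polynomial.smul_comp]
    match_scalars <;> (field_simp; try ring))

theorem Phi_injective : Function.Injective (Phi k) := by
  rw [injective_iff_map_eq_one]
  rintro ⟨n, a⟩ hg
  have hYeval : psi k a ((a : k) • Multiplicative.toAdd n) Y = Y := by
    have : Phi k ⟨n, a⟩ Y = (1 : JordanPlane k ≃ₐ[k] JordanPlane k) Y := by rw [hg]
    simpa [Phi] using this
  rw [psi_apply, F_jy] at hYeval
  have ha : (a : k) = 1 := by
    have h0 : (a : k) • Y = (1 : k) • Y := by rw [one_smul, hYeval]
    exact smul_left_injective k (Y_ne_zero k) h0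
  have hXeval : psi k a ((a : k) • Multiplicative.toAdd n) X = X := by
    have : Phi k ⟨n, a⟩ X = (1 : JordanPlane k ≃ₐ[k] JordanPlane k) X := by rw [hg]
    simpa [Phi] using this
  rw [psi_apply, F_jx, ha, one_smul, one_smul] at hXeval
  have hp : Multiplicative.toAdd n = 0 :=
    aeval_Y_eq_zero k (by
      have := hXeval
      nth_rewrite 2 [← add_zero X] at this
      exact add_left_cancel this)
  have hn : n = 1 := by rw [← ofAdd_toAdd n, hp]; rfl
  have ha' : a = 1 := Units.ext (by rw [ha, Units.val_one])
  rw [hn, ha']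
  rfl

theorem Phi_surjective : Function.Surjective (Phi k) := by
  intro φ
  obtain ⟨α, hα, p, hx, hy⟩ := classify k φ
  refine ⟨⟨Multiplicative.ofAdd (α⁻¹ • p), Units.mk0 α hα⟩, ?_⟩
  have hparam : ((Units.mk0 α hα : kˣ) : k) • Multiplicative.toAdd (Multiplicative.ofAdd
      (α⁻¹ • p)) = p := by
    rw [toAdd_ofAdd]
    show α • α⁻¹ • p = p
    rw [smul_smul, mul_inv_cancel₀ hα, one_smul]
  apply equiv_ext
  · show psi k (Units.mk0 α hα) _ X = φ X
    rw [hparam, psi_apply, F_jx, hx, Algebra.smul_def]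
    rfl
  · show psi k (Units.mk0 α hα) _ Y = φ Y
    rw [hparam, psi_apply, F_jy, hy, Algebra.smul_def]
    rfl

end JP

theorem jordanPlane_automorphisms (k : Type) [Field k] [IsAlgClosed k] [CharZero k] :
    (∀ φ : JordanPlane k ≃ₐ[k] JordanPlane k, ∃ α : k, α ≠ 0 ∧ ∃ p : Polynomial k,
        φ (jx k) = algebraMap k (JordanPlane k) α * jx k + Polynomial.aeval (jy k) p ∧
        φ (jy k) = algebraMap k (JordanPlane k) α * jy k) ∧
    ∃ act : kˣ →* MulAut (Multiplicative (Polynomial k)),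
      Nonempty ((JordanPlane k ≃ₐ[k] JordanPlane k) ≃*
        Multiplicative (Polynomial k) ⋊[act] kˣ) := by
  constructor
  · exact fun φ => JP.classify k φ
  · exact ⟨JP.act k,
      ⟨(MulEquiv.ofBijective (JP.Phi k) ⟨JP.Phi_injective k, JP.Phi_surjective k⟩).symm⟩⟩
end

section
/- Let X, Y ∈ M_n(k) satisfy XY - YX = Y² over an algebraically closed field k of characteristic 0. Then X and Y can be simultaneously conjugated to upper triangular form; equivalently, there is a complete flag invariant under both X and Y. -/
lemma aux_pow_comm {R : Type*} [Ring R] (f g : R) (h : f * g - g * f = g ^ 2) :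
    ∀ m : ℕ, f * g ^ m = g ^ m * f + m • g ^ (m + 1) := by
  have hfg : f * g = g * f + g ^ 2 := by rw [← h]; abel
  intro m
  induction m with
  | zero => simp
  | succ m ih =>
    calc f * g ^ (m + 1) = (f * g ^ m) * g := by rw [pow_succ, mul_assoc]
      _ = (g ^ m * f + m • g ^ (m + 1)) * g := by rw [ih]
      _ = g ^ m * (f * g) + m • g ^ (m + 2) := by
            rw [add_mul, smul_mul_assoc, mul_assoc, ← pow_succ]
      _ = (g ^ m * (g * f) + g ^ (m + 2)) + m • g ^ (m + 2) := by
            rw [hfg, mul_add]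
            congr 2
            rw [← pow_add]
      _ = g ^ (m + 1) * f + (m + 1) • g ^ (m + 2) := by
            rw [succ_nsmul, ← mul_assoc, ← pow_succ]
            abel

lemma aux_sim {R : Type*} [Ring R] (f g : R) (h : f * g - g * f = g ^ 2) (m : ℕ) :
    g ^ m * (f + m • g) = f * g ^ m := by
  rw [aux_pow_comm f g h m, mul_add, mul_smul_comm]
  congr 2
  rw [← pow_succ]

open Polynomial in
lemma det_g_eq_zero {k : Type*} [Field k] [CharZero k] {n : ℕ} (hn : 0 < n)
    (A B : Matrix (Fin n) (Fin n) k) (h : A * B - B * A = B ^ 2) : B.det = 0 := by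
  by_contra hB
  have hdet : ∀ m : ℕ, (A + (m : k) • B).det = A.det := by
    intro m
    have hc := congrArg Matrix.det (aux_sim A B h m)
    rw [Matrix.det_mul, Matrix.det_mul, Matrix.det_pow] at hc
    have hBd : B.det ^ m ≠ 0 := pow_ne_zero _ hB
    rw [Nat.cast_smul_eq_nsmul]
    have := mul_left_cancel₀ hBd (hc.trans (mul_comm _ _))
    exact this
  set p : Polynomial k := (A.map C + (X : k[X]) • B.map C).det with hp
  have hev : ∀ s : k, p.eval s = (A + s • B).det := by
    intro s
    rw [hp, ← Polynomial.coe_evalRingHom, RingHom.map_det]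
    congr 1
    ext i j
    simp [Matrix.map_apply, Matrix.add_apply, Matrix.smul_apply, smul_eq_mul]
    ring
  have hpc : p = C A.det := by
    apply Polynomial.eq_of_infinite_eval_eq
    apply Set.Infinite.mono (s := Set.range ((↑) : ℕ → k))
    · rintro x ⟨m, rfl⟩
      simp only [Set.mem_setOf_eq, hev, eval_C]
      exact hdet m
    · exact Set.infinite_range_of_injective Nat.cast_injective
  have hall : ∀ s : k, (A + s • B).det = A.det := by
    intro s; rw [← hev, hpc, eval_C]
  set q : Polynomial k := ((X : k[X]) • A.map C + B.map C).det with hq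
  have hev2 : ∀ s : k, q.eval s = (s • A + B).det := by
    intro s
    rw [hq, ← Polynomial.coe_evalRingHom, RingHom.map_det]
    congr 1
    ext i j
    simp [Matrix.map_apply, Matrix.add_apply, Matrix.smul_apply, smul_eq_mul]
    ring
  have hq2 : q = C A.det * X ^ n := by
    apply Polynomial.eq_of_infinite_eval_eq
    apply Set.Infinite.mono (s := ({0}ᶜ : Set k))
    · rintro s hs
      have hs : s ≠ 0 := hs
      simp only [Set.mem_setOf_eq, hev2, eval_mul, eval_C, eval_pow, eval_X]
      have : s • A + B = s • (A + s⁻¹ • B) := by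
        rw [smul_add, smul_smul, mul_inv_cancel₀ hs, one_smul]
      rw [this, Matrix.det_smul, hall, Fintype.card_fin]
      ring
    · exact (Set.finite_singleton (0 : k)).infinite_compl
  have hfin : B.det = 0 := by
    have h0 := hev2 0
    rw [hq2] at h0
    simpa [zero_pow hn.ne'] using h0.symm
  exact hB hfin

open Module in
lemma exists_common_eigenvector {k : Type*} [Field k] [IsAlgClosed k] [CharZero k]
    {V : Type*} [AddCommGroup V] [Module k V] [FiniteDimensional k V] [Nontrivial V]
    (f g : Module.End k V) (h : f * g - g * f = g ^ 2) :
    ∃ (v : V) (μ : k), v ≠ 0 ∧ g v = 0 ∧ f v = μ • v := by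
  -- the kernel of g is nontrivial
  have hker : LinearMap.ker g ≠ ⊥ := by
    intro hbot
    have hb := Module.finBasis k V
    set A := LinearMap.toMatrix hb hb f with hA
    set B := LinearMap.toMatrix hb hb g with hBdef
    have hrel : A * B - B * A = B ^ 2 := by
      have := congrArg (LinearMap.toMatrix hb hb) h
      simpa [map_sub, LinearMap.toMatrix_mul, ← hA, ← hBdef, pow_two] using this
    have hu : IsUnit g := LinearMap.isUnit_iff_ker_eq_bot g |>.mpr hbot
    have hub : IsUnit B := hu.map (LinearMap.toMatrixAlgEquiv hb)
    have hdet : IsUnit B.det := (Matrix.isUnit_iff_isUnit_det B).mp hub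
    have hpos : 0 < finrank k V := finrank_pos
    have := det_g_eq_zero hpos A B hrel
    rw [this] at hdet
    exact hdet.ne_zero rfl
  -- ker g is f-invariant
  have hinv : ∀ x ∈ LinearMap.ker g, f x ∈ LinearMap.ker g := by
    intro x hx
    have hx0 : g x = 0 := hx
    have hgf : g * f = f * g - g ^ 2 := by rw [← h]; abel
    have : g (f x) = 0 := by
      have := congrArg (fun t : Module.End k V => t x) hgf
      simpa [LinearMap.sub_apply, Module.End.mul_apply, pow_two, hx0] using this
    exact this
  -- take an eigenvector of f restricted to ker g
  have hne : Nontrivial (LinearMap.ker g) := Submodule.nontrivial_iff_ne_bot.mpr hker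
  set f' : Module.End k (LinearMap.ker g) := LinearMap.restrict f hinv with hf'
  obtain ⟨μ, hμ⟩ := Module.End.exists_eigenvalue f'
  obtain ⟨w, hw⟩ := hμ.exists_hasEigenvector
  refine ⟨(w : V), μ, ?_, w.2, ?_⟩
  · simpa [Submodule.coe_eq_zero] using hw.2
  · have := hw.apply_eq_smul
    have h2 := congrArg (Subtype.val) this
    simpa [hf', LinearMap.restrict_apply] using h2

open Module in
lemma finrank_comap_mkQ {k : Type*} [Field k] {V : Type*} [AddCommGroup V] [Module k V]
    [FiniteDimensional k V] (K : Submodule k V) (U : Submodule k (V ⧸ K)) :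
    finrank k (U.comap K.mkQ) = finrank k U + finrank k K := by
  set φ := K.mkQ.domRestrict (U.comap K.mkQ) with hφ
  have hrange : LinearMap.range φ = U := by
    rw [hφ, LinearMap.range_domRestrict, Submodule.map_comap_eq_of_surjective
      (Submodule.mkQ_surjective K)]
  have hker : LinearMap.ker φ = (LinearMap.ker K.mkQ).comap (U.comap K.mkQ).subtype := by
    rw [hφ, LinearMap.ker_domRestrict]
  have h1 : finrank k (LinearMap.ker φ) = finrank k K := by
    rw [hker, Submodule.ker_mkQ]
    have hle : K ≤ U.comap K.mkQ := by
      intro x hx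
      simp [Submodule.mem_comap, (Submodule.Quotient.mk_eq_zero K).mpr hx]
    exact LinearEquiv.finrank_eq (Submodule.comapSubtypeEquivOfLe hle)
  have := LinearMap.finrank_range_add_finrank_ker φ
  rw [hrange, h1] at this
  omega

universe uV in
open Module in
lemma exists_flag {k : Type*} [Field k] [IsAlgClosed k] [CharZero k] :
    ∀ (m : ℕ) (V : Type uV) (_ : AddCommGroup V), ∀ (_ : Module k V) (_ : FiniteDimensional k V),
      finrank k V = m → ∀ f g : Module.End k V, f * g - g * f = g ^ 2 →
      ∃ W : Fin (m + 1) → Submodule k V,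
        Monotone W ∧ (∀ i, finrank k (W i) = i) ∧
        (∀ i, ∀ x ∈ W i, f x ∈ W i) ∧ (∀ i, ∀ x ∈ W i, g x ∈ W i) := by
  intro m
  induction m with
  | zero =>
    intro V _ _ _ hV f g hfg
    refine ⟨fun _ => ⊥, monotone_const, ?_, by simp, by simp⟩
    intro i
    have h0 : (i : ℕ) = 0 := by omega
    simp [h0]
  | succ m ih =>
    intro V _ _ _ hV f g hfg
    have : Nontrivial V := by
      exact nontrivial_of_finrank_pos (R := k) (by omega)
    obtain ⟨v, μ, hv0, hgv, hfv⟩ := exists_common_eigenvector f g hfg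
    set K := Submodule.span k {v} with hK
    have hfK : K ≤ K.comap f := by
      rw [hK, Submodule.span_le]
      intro x hx
      rw [Set.mem_singleton_iff] at hx
      subst hx
      simp only [SetLike.mem_coe, Submodule.mem_comap, hfv]
      exact Submodule.smul_mem _ _ (Submodule.mem_span_singleton_self _)
    have hgK : K ≤ K.comap g := by
      rw [hK, Submodule.span_le]
      intro x hx
      rw [Set.mem_singleton_iff] at hx
      subst hx
      simp [Submodule.mem_comap, hgv]
    have hKrank : finrank k K = 1 := finrank_span_singleton hv0
    have hQ : finrank k (V ⧸ K) = m := by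
      have := Submodule.finrank_quotient_add_finrank K
      omega
    set fq := Submodule.mapQ K K f hfK with hfq
    set gq := Submodule.mapQ K K g hgK with hgq
    have hrelq : fq * gq - gq * fq = gq ^ 2 := by
      apply LinearMap.ext
      intro z
      obtain ⟨x, rfl⟩ := Submodule.Quotient.mk_surjective K z
      have hx := congrArg (fun t : Module.End k V => t x) hfg
      simp only [LinearMap.sub_apply, Module.End.mul_apply, pow_two] at hx
      simp only [LinearMap.sub_apply, Module.End.mul_apply, pow_two, hfq, hgq]
      have e1 : ∀ (φ : Module.End k V) (hφ : K ≤ K.comap φ) (y : V),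
          (K.mapQ K φ hφ) (K.mkQ y) = K.mkQ (φ y) := fun _ _ _ => rfl
      show (K.mapQ K f hfK) ((K.mapQ K g hgK) (K.mkQ x)) -
          (K.mapQ K g hgK) ((K.mapQ K f hfK) (K.mkQ x)) =
          (K.mapQ K g hgK) ((K.mapQ K g hgK) (K.mkQ x))
      simp only [e1]
      rw [← map_sub, hx]
    obtain ⟨Wq, hmono, hrank, hfi, hgi⟩ := ih (V ⧸ K) inferInstance inferInstance inferInstance hQ fq gq hrelq
    refine ⟨Fin.cons ⊥ (fun j => (Wq j).comap K.mkQ), ?_, ?_, ?_, ?_⟩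
    · intro i j hij
      induction j using Fin.cases with
      | zero =>
        have h0 : i = 0 := le_antisymm hij (Fin.zero_le i)
        subst h0
        exact le_refl _
      | succ j' =>
        induction i using Fin.cases with
        | zero => simp only [Fin.cons_zero]; exact bot_le
        | succ i' =>
          simp only [Fin.cons_succ]
          exact Submodule.comap_mono (hmono (by
            rwa [Fin.succ_le_succ_iff] at hij))
    · intro i
      induction i using Fin.cases with
      | zero => simp
      | succ j =>
        rw [Fin.cons_succ, finrank_comap_mkQ, hrank j, hKrank, Fin.val_succ]
    · intro i
      induction i using Fin.cases with
      | zero => simp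
      | succ j =>
        simp only [Fin.cons_succ, Submodule.mem_comap]
        intro x hx
        exact hfi j _ hx
    · intro i
      induction i using Fin.cases with
      | zero => simp
      | succ j =>
        simp only [Fin.cons_succ, Submodule.mem_comap]
        intro x hx
        exact hgi j _ hx

open Module in
lemma flag_basis {k : Type*} [Field k] {V : Type*} [AddCommGroup V] [Module k V]
    [FiniteDimensional k V] {n : ℕ} (hn : finrank k V = n)
    (W : Fin (n + 1) → Submodule k V) (hmono : Monotone W)
    (hrank : ∀ i, finrank k (W i) = i) :
    ∃ b : Basis (Fin n) k V,
      ∀ j : Fin n, W j.succ = Submodule.span k (⇑b '' {i | i ≤ j}) := by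
  have hlt : ∀ j : Fin n, W j.castSucc < W j.succ := by
    intro j
    apply Submodule.lt_of_le_of_finrank_lt_finrank (hmono (Fin.castSucc_lt_succ : j.castSucc < j.succ).le)
    rw [hrank, hrank, Fin.coe_castSucc, Fin.val_succ]
    omega
  have hch : ∀ j : Fin n, ∃ x ∈ W j.succ, x ∉ W j.castSucc := fun j =>
    SetLike.exists_of_lt (hlt j)
  choose v hv1 hv2 using hch
  have hspan : ∀ j : Fin (n + 1), Submodule.span k (v '' {i | i.castSucc < j}) = W j := by
    intro j
    induction j using Fin.induction with
    | zero =>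
      have hset : {i : Fin n | i.castSucc < 0} = ∅ := by
        ext i; simp [Fin.not_lt_zero]
      rw [hset, Set.image_empty, Submodule.span_empty]
      symm
      rw [← Submodule.finrank_eq_zero (R := k)]
      simpa using hrank 0
    | succ j ih =>
      have hset : {i : Fin n | i.castSucc < j.succ} = insert j {i : Fin n | i.castSucc < j.castSucc} := by
        ext i
        simp only [Set.mem_setOf_eq, Set.mem_insert_iff, Fin.castSucc_lt_succ_iff,
          Fin.castSucc_lt_castSucc_iff]
        constructor
        · intro hle; rcases eq_or_lt_of_le hle with h | h
          · exact Or.inl h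
          · exact Or.inr h
        · rintro (rfl | h)
          · exact le_refl _
          · exact h.le
      rw [hset, Set.image_insert_eq, Submodule.span_insert, ih]
      set S := Submodule.span k {v j} ⊔ W j.castSucc with hS
      have hle : S ≤ W j.succ := by
        apply sup_le _ (hmono (Fin.castSucc_lt_succ : j.castSucc < j.succ).le)
        rw [Submodule.span_le, Set.singleton_subset_iff]
        exact hv1 j
      have hlt2 : W j.castSucc < S := by
        apply lt_of_le_of_ne le_sup_right
        intro hEq
        apply hv2 j
        rw [hEq]
        exact Submodule.mem_sup_left (Submodule.mem_span_singleton_self _)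
      have hfr : finrank k (W j.succ) ≤ finrank k S := by
        have h1 := Submodule.finrank_lt_finrank_of_lt hlt2
        rw [hrank] at h1
        rw [hrank, Fin.val_succ, Fin.coe_castSucc] at *
        omega
      exact Submodule.eq_of_le_of_finrank_le hle hfr
  have htop : Submodule.span k (Set.range v) = ⊤ := by
    have := hspan (Fin.last n)
    have hset : {i : Fin n | i.castSucc < Fin.last n} = Set.univ := by
      ext i; simp [Fin.castSucc_lt_last]
    rw [hset, Set.image_univ] at this
    rw [this]
    apply Submodule.eq_top_of_finrank_eq
    rw [hrank, Fin.val_last, hn]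
  refine ⟨basisOfTopLeSpanOfCardEqFinrank v htop.ge (by rw [Fintype.card_fin, hn]), ?_⟩
  intro j
  rw [coe_basisOfTopLeSpanOfCardEqFinrank, ← hspan j.succ]
  congr 1
  ext i
  simp [Fin.castSucc_lt_succ_iff]

open Module in
theorem simultaneous_triangularization {k : Type*} [Field k] [IsAlgClosed k] [CharZero k] {n : ℕ}
    (X Y : Matrix (Fin n) (Fin n) k) (h : X * Y - Y * X = Y ^ 2) :
    ∃ P : GL (Fin n) k,
      Matrix.BlockTriangular
        (((P⁻¹ : GL (Fin n) k) : Matrix (Fin n) (Fin n) k) * X *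
          ((P : GL (Fin n) k) : Matrix (Fin n) (Fin n) k)) id ∧
      Matrix.BlockTriangular
        (((P⁻¹ : GL (Fin n) k) : Matrix (Fin n) (Fin n) k) * Y *
          ((P : GL (Fin n) k) : Matrix (Fin n) (Fin n) k)) id := by
  classical
  set e := Pi.basisFun k (Fin n) with he
  set f := Matrix.toLinAlgEquiv e X with hf
  set g := Matrix.toLinAlgEquiv e Y with hg
  have hrel : f * g - g * f = g ^ 2 := by
    rw [hf, hg, ← map_mul, ← map_mul, ← map_sub, ← map_pow, h]
  have hfr : finrank k (Fin n → k) = n := Module.finrank_fin_fun (R := k)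
  obtain ⟨W, hmono, hrank, hfi, hgi⟩ :=
    exists_flag n (Fin n → k) inferInstance inferInstance inferInstance hfr f g hrel
  obtain ⟨b, hb⟩ := flag_basis hfr W hmono hrank
  have htri : ∀ (φ : Module.End k (Fin n → k)), (∀ i, ∀ x ∈ W i, φ x ∈ W i) →
      ∀ i j : Fin n, j < i → LinearMap.toMatrix b b φ i j = 0 := by
    intro φ hφ i j hij
    have hbj : b j ∈ W j.succ := by
      rw [hb j]
      exact Submodule.subset_span ⟨j, le_refl j, rfl⟩
    have hmem : φ (b j) ∈ W j.succ := hφ j.succ _ hbj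
    rw [hb j] at hmem
    have hsupp := (Basis.mem_span_image b).mp hmem
    rw [LinearMap.toMatrix_apply]
    by_contra hne
    have h1 : i ∈ (b.repr (φ (b j))).support := Finsupp.mem_support_iff.mpr hne
    have h2 : (i : Fin n) ∈ {i : Fin n | i ≤ j} := hsupp h1
    exact absurd h2 (by simpa using hij.not_ge)
  have hconjX : b.toMatrix ⇑e * X * e.toMatrix ⇑b = LinearMap.toMatrix b b f := by
    have hX : LinearMap.toMatrix e e f = X := by
      rw [hf]
      exact LinearMap.toMatrixAlgEquiv_toLinAlgEquiv e X
    rw [← hX]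
    exact basis_toMatrix_mul_linearMap_toMatrix_mul_basis_toMatrix b e b e f
  have hconjY : b.toMatrix ⇑e * Y * e.toMatrix ⇑b = LinearMap.toMatrix b b g := by
    have hY : LinearMap.toMatrix e e g = Y := by
      rw [hg]
      exact LinearMap.toMatrixAlgEquiv_toLinAlgEquiv e Y
    rw [← hY]
    exact basis_toMatrix_mul_linearMap_toMatrix_mul_basis_toMatrix b e b e g
  refine ⟨⟨e.toMatrix ⇑b, b.toMatrix ⇑e,
      Basis.toMatrix_mul_toMatrix_flip e b, Basis.toMatrix_mul_toMatrix_flip b e⟩, ?_, ?_⟩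
  · intro i j hij
    have : (b.toMatrix ⇑e * X * e.toMatrix ⇑b) i j = 0 := by
      rw [hconjX]
      exact htri f hfi i j hij
    exact this
  · intro i j hij
    have : (b.toMatrix ⇑e * Y * e.toMatrix ⇑b) i j = 0 := by
      rw [hconjY]
      exact htri g hgi i j hij
    exact this
end

section
/- Let M be a finite-dimensional module over the Jordan plane R = k⟨x,y⟩/(xy - yx - y²), given by matrices X, Y with XY - YX = Y². Then each generalized eigenspace M_λ = ker (X - λI)^n of X is invariant under Y; consequently M decomposes as a direct sum of R-submodules indexed by the eigenvalues of X, and any indecomposable finite-dimensional R-module has X with a single eigenvalue. -/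
open Module LinearMap

section helpers

variable {k : Type*} [Field k] {V : Type*} [AddCommGroup V] [Module k V]

lemma jordan_comm_pow (X Y : V →ₗ[k] V) (h : X * Y - Y * X = Y * Y) (p : ℕ) :
    X * Y ^ p = Y ^ p * X + (p : k) • Y ^ (p + 1) := by
  have hXY : X * Y = Y * X + Y * Y := by rw [← h]; abel
  induction p with
  | zero => simp
  | succ p ih =>
    have e1 : X * Y ^ (p + 1) = (X * Y ^ p) * Y := by rw [pow_succ, mul_assoc]
    rw [e1, ih, add_mul, smul_mul_assoc, mul_assoc, hXY, mul_add]
    have h1 : Y ^ p * (Y * X) = Y ^ (p + 1) * X := by rw [← mul_assoc, pow_succ]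
    have h2 : Y ^ p * (Y * Y) = Y ^ (p + 1 + 1) := by
      rw [← mul_assoc, ← pow_succ, ← pow_succ]
    have h3 : Y ^ (p + 1) * Y = Y ^ (p + 1 + 1) := by rw [← pow_succ]
    rw [h1, h2, h3]
    push_cast
    rw [add_smul, one_smul]
    abel

lemma jordan_comm_pow_nu (X Y : V →ₗ[k] V) (h : X * Y - Y * X = Y * Y) (ν : k) (t : ℕ) :
    (Y - ν • 1) ^ (t + 1) * X
      = X * (Y - ν • 1) ^ (t + 1) - ((t : k) + 1) • (Y * Y * (Y - ν • 1) ^ t) := by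
  set A := Y - ν • 1 with hAdef
  set C := Y * Y with hCdef
  have hA : A * X = X * A - C := by
    have hYX : Y * X = X * Y - C := by rw [← h]; abel
    rw [hAdef, sub_mul, mul_sub, hYX, smul_mul_assoc, mul_smul_comm, one_mul, mul_one]
    abel
  have hAcomm : A * C = C * A := by
    have : Commute A C := by
      refine Commute.sub_left ((Commute.refl Y).mul_right (Commute.refl Y)) ?_
      exact ((Commute.one_left C).smul_left ν)
    exact this.eq
  induction t with
  | zero => simpa using hA
  | succ t ih =>
    have e1 : A ^ (t + 1 + 1) * X = A * (A ^ (t + 1) * X) := by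
      rw [pow_succ', mul_assoc]
    have hACA : A * (C * A ^ t) = C * A ^ (t + 1) := by
      rw [← mul_assoc, hAcomm, mul_assoc, ← pow_succ']
    calc A ^ (t + 1 + 1) * X
        = A * (X * A ^ (t + 1)) - ((t : k) + 1) • (C * A ^ (t + 1)) := by
          rw [e1, ih, mul_sub, mul_smul_comm, hACA]
      _ = (A * X) * A ^ (t + 1) - ((t : k) + 1) • (C * A ^ (t + 1)) := by
          rw [← mul_assoc]
      _ = X * A ^ (t + 1 + 1) - (C * A ^ (t + 1))
            - ((t : k) + 1) • (C * A ^ (t + 1)) := by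
          rw [hA, sub_mul, mul_assoc, ← pow_succ']
      _ = X * A ^ (t + 1 + 1) - ((t + 1 : ℕ) + 1 : k) • (C * A ^ (t + 1)) := by
          push_cast
          module

end helpers

section nilp

variable {k : Type*} [Field k] [IsAlgClosed k] [CharZero k]
  {V : Type*} [AddCommGroup V] [Module k V] [FiniteDimensional k V]

lemma jordan_Y_nilpotent_s19 (X Y : V →ₗ[k] V) (h : X * Y - Y * X = Y * Y) :
    Y ^ Module.finrank k V = 0 := by
  have heig : ∀ ν : k, Module.End.HasEigenvalue Y ν → ν = 0 := by
    intro ν hν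
    set U := Module.End.maxGenEigenspace Y ν with hUdef
    have hXU : Set.MapsTo X U U := by
      intro x hx
      rw [hUdef, SetLike.mem_coe, Module.End.mem_maxGenEigenspace] at hx ⊢
      obtain ⟨m, hm⟩ := hx
      refine ⟨m + 1, ?_⟩
      have hcomm := jordan_comm_pow_nu X Y h ν m
      have happ := DFunLike.congr_fun hcomm x
      simp only [Module.End.mul_apply, LinearMap.sub_apply, LinearMap.smul_apply] at happ
      have hm1 : ((Y - ν • 1) ^ (m + 1)) x = 0 := by
        rw [pow_succ', Module.End.mul_apply, hm, map_zero]
      rw [happ, hm1, map_zero, hm, map_zero, map_zero, smul_zero, sub_zero]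
    have hYU : Set.MapsTo Y U U :=
      Module.End.mapsTo_maxGenEigenspace_of_comm (Commute.refl Y) ν
    have hAU : Set.MapsTo (Y - ν • (1 : V →ₗ[k] V)) (U : Set V) (U : Set V) := by
      intro x hx
      have e : (Y - ν • 1) x = Y x - ν • x := by simp
      rw [SetLike.mem_coe, e]
      exact U.sub_mem (hYU hx) (U.smul_mem ν hx)
    obtain ⟨v, hvv, hv0⟩ := hν.exists_hasEigenvector
    have hvU : v ∈ U := (Module.End.genEigenspace Y ν).monotone le_top hvv
    have hUne : Nontrivial U := by
      rw [Submodule.nontrivial_iff_ne_bot, Submodule.ne_bot_iff]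
      exact ⟨v, hvU, hv0⟩
    set n := Module.finrank k V with hn
    set X' := X.restrict (fun x hx => hXU hx) with hX'
    set Y' := Y.restrict (fun x hx => hYU hx) with hY'
    set A' := (Y - ν • (1 : V →ₗ[k] V)).restrict (fun x hx => hAU hx) with hA'
    have hAeq : A' = Y' - ν • (1 : U →ₗ[k] U) := by
      rw [hY', hA']
      ext u
      simp
    have hAnil : IsNilpotent A' := by
      refine ⟨n, ?_⟩
      rw [hA', Module.End.pow_restrict]
      ext u
      have hu : (u : V) ∈ Module.End.genEigenspace Y ν (n : ℕ) := by
        rw [← Module.End.maxGenEigenspace_eq_genEigenspace_finrank Y ν]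
        exact u.2
      rw [Module.End.mem_genEigenspace_nat, LinearMap.mem_ker] at hu
      simpa using hu
    have hA2nil : IsNilpotent (A' * A') := by
      obtain ⟨m, hm⟩ := hAnil
      exact ⟨m, by rw [(Commute.refl A').mul_pow, hm, zero_mul]⟩
    have hrel : X' * Y' - Y' * X' = Y' * Y' := by
      ext u
      have := DFunLike.congr_fun h (u : V)
      simp only [Module.End.mul_apply, LinearMap.sub_apply] at this
      simp [hX', hY', this]
    have h0 : LinearMap.trace k U (Y' * Y') = 0 := by
      rw [← hrel, map_sub, LinearMap.trace_mul_comm, sub_self]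
    have hYexp : Y' = A' + ν • (1 : U →ₗ[k] U) := by rw [hAeq]; abel
    have hexp : Y' * Y' = A' * A' + ν • A' + ν • A' + (ν * ν) • (1 : U →ₗ[k] U) := by
      rw [hYexp]
      simp only [mul_add, add_mul, mul_smul_comm, smul_mul_assoc, smul_smul, smul_add, one_mul, mul_one]
      abel
    have htrA : LinearMap.trace k U A' = 0 := by
      have := LinearMap.isNilpotent_trace_of_isNilpotent hAnil
      exact this.eq_zero
    have htrA2 : LinearMap.trace k U (A' * A') = 0 := by
      have := LinearMap.isNilpotent_trace_of_isNilpotent hA2nil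
      exact this.eq_zero
    have hfin : (Module.finrank k U : k) ≠ 0 := by
      have : 0 < Module.finrank k U := Module.finrank_pos
      exact_mod_cast Nat.cast_ne_zero.mpr this.ne'
    have : ν * ν * (Module.finrank k U : k) = 0 := by
      have h1 := h0
      rw [hexp] at h1
      simp only [map_add, map_smul, htrA, htrA2, LinearMap.trace_one, smul_zero,
        smul_eq_mul, add_zero, zero_add, mul_zero] at h1
      exact h1
    have hνν : ν * ν = 0 := by
      rcases mul_eq_zero.mp this with h1 | h1
      · exact h1
      · exact absurd h1 hfin
    exact mul_self_eq_zero.mp hνν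
  -- all generalized eigenspaces at nonzero eigenvalues vanish
  have hbot : ∀ ν : k, ν ≠ 0 → Module.End.maxGenEigenspace Y ν = ⊥ := by
    intro ν hν0
    by_contra hne
    have h1 : Module.End.HasUnifEigenvalue Y ν ⊤ := hne
    have h2 : Module.End.HasEigenvalue Y ν :=
      (Module.End.hasUnifEigenvalue_iff_hasUnifEigenvalue_one (by norm_num)).mp h1
    exact hν0 (heig ν h2)
  have htop := Module.End.iSup_maxGenEigenspace_eq_top Y
  have h0top : Module.End.maxGenEigenspace Y 0 = ⊤ := by
    refine le_antisymm le_top ?_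
    rw [← htop]
    refine iSup_le fun ν => ?_
    by_cases hν0 : ν = 0
    · rw [hν0]
    · rw [hbot ν hν0]; exact bot_le
  have hker : LinearMap.ker (Y ^ Module.finrank k V) = ⊤ := by
    rw [Module.End.maxGenEigenspace_eq_genEigenspace_finrank Y 0,
      Module.End.genEigenspace_nat] at h0top
    simpa using h0top
  exact LinearMap.ker_eq_top.mp hker

end nilp

theorem generalized_eigenspace_decomposition {k : Type*} [Field k] [IsAlgClosed k] [CharZero k]
    {V : Type*} [AddCommGroup V] [Module k V] [FiniteDimensional k V]
    (X Y : V →ₗ[k] V) (h : X * Y - Y * X = Y * Y) :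
    -- the generalized eigenspaces of X
    let E : k → Submodule k V :=
      fun μ => LinearMap.ker ((X - μ • 1) ^ Module.finrank k V)
    -- each generalized eigenspace of X is invariant under Y
    (∀ μ : k, (E μ).map Y ≤ E μ) ∧
    -- (each is obviously invariant under X)
    (∀ μ : k, (E μ).map X ≤ E μ) ∧
    -- the module is the direct sum of the generalized eigenspaces (R-submodules)
    iSupIndep E ∧ (⨆ μ : k, E μ) = ⊤ ∧
    -- an indecomposable module has X with a single eigenvalue
    ((Nontrivial V ∧ ∀ p q : Submodule k V, p.map X ≤ p → p.map Y ≤ p →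
        q.map X ≤ q → q.map Y ≤ q → IsCompl p q → p = ⊥ ∨ q = ⊥) →
      ∃! μ : k, E μ ≠ ⊥) := by
  intro E
  set n := Module.finrank k V with hn
  have hYnil : Y ^ n = 0 := jordan_Y_nilpotent_s19 X Y h
  have hEdef : ∀ μ : k, E μ = LinearMap.ker ((X - μ • 1) ^ n) := fun μ => rfl
  have hEker : ∀ (μ : k) (v : V), v ∈ E μ ↔ ((X - μ • 1) ^ n) v = 0 := by
    intro μ v; rw [hEdef, LinearMap.mem_ker]
  -- commutation of B := X - μ•1 with itself and with X
  have hBX : ∀ (μ : k) (t : ℕ), Commute ((X - μ • (1 : V →ₗ[k] V)) ^ t) X := fun μ t =>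
    (((Commute.refl X).sub_left ((Commute.one_left X).smul_left μ)).pow_left t)
  -- B-stability of E μ
  have hEB : ∀ (μ : k) (v : V), v ∈ E μ → ∀ s : ℕ, (((X - μ • 1) ^ s)) v ∈ E μ := by
    intro μ v hv s
    rw [hEker] at hv ⊢
    have : ((X - μ • 1) ^ n) (((X - μ • 1) ^ s) v) = ((X - μ • 1) ^ s) (((X - μ • 1) ^ n) v) := by
      rw [← Module.End.mul_apply, ← Module.End.mul_apply, ← pow_add, ← pow_add, add_comm]
    rw [this, hv, map_zero]
  -- X-invariance
  have hXinv : ∀ μ : k, (E μ).map X ≤ E μ := by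
    intro μ
    rintro _ ⟨v, hv, rfl⟩
    rw [SetLike.mem_coe, hEker] at hv
    rw [hEker]
    have := DFunLike.congr_fun ((hBX μ n).eq) v
    simp only [Module.End.mul_apply] at this
    rw [this, hv, map_zero]
  -- key induction for Y-invariance
  have key : ∀ μ : k, ∀ q p : ℕ, n ≤ p + q → ∀ v, v ∈ E μ → (Y ^ p) v ∈ E μ := by
    intro μ q
    induction q with
    | zero =>
      intro p hp v _
      have hY0 : Y ^ p = 0 := by
        have hp' : n ≤ p := by omega
        calc Y ^ p = Y ^ (n + (p - n)) := by congr 1; omega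
        _ = Y ^ n * Y ^ (p - n) := pow_add Y n (p - n)
        _ = 0 := by rw [hYnil, zero_mul]
      rw [hY0]
      simp
    | succ q ih =>
      intro p hp v hv
      by_cases hle : n ≤ p + q
      · exact ih p hle v hv
      have inner : ∀ t : ℕ, ∃ w ∈ E μ,
          (((X - μ • 1) ^ t)) ((Y ^ p) v) = (Y ^ p) (((X - μ • 1) ^ t) v) + w := by
        intro t
        induction t with
        | zero => exact ⟨0, (E μ).zero_mem, by simp⟩
        | succ t iht =>
          obtain ⟨w, hw, hw2⟩ := iht
          have hwB : (X - μ • 1) w ∈ E μ := by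
            have h1 : (X - μ • 1) w = X w - μ • w := by simp
            rw [h1]
            exact (E μ).sub_mem (hXinv μ ⟨w, hw, rfl⟩) ((E μ).smul_mem μ hw)
          have hYp1 : (Y ^ (p + 1)) (((X - μ • 1) ^ t) v) ∈ E μ :=
            ih (p + 1) (by omega) _ (hEB μ v hv t)
          refine ⟨(p : k) • (Y ^ (p + 1)) (((X - μ • 1) ^ t) v) + (X - μ • 1) w,
            (E μ).add_mem ((E μ).smul_mem _ hYp1) hwB, ?_⟩
          have e1 : ((X - μ • 1) ^ (t + 1)) ((Y ^ p) v)
              = (X - μ • 1) (((X - μ • 1) ^ t) ((Y ^ p) v)) := by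
            rw [pow_succ']; rfl
          have e2 : ∀ u : V, (X - μ • 1) ((Y ^ p) u)
              = (Y ^ p) ((X - μ • 1) u) + (p : k) • (Y ^ (p + 1)) u := by
            intro u
            have hc := DFunLike.congr_fun (jordan_comm_pow X Y h p) u
            simp only [Module.End.mul_apply, LinearMap.add_apply, LinearMap.smul_apply] at hc
            simp only [LinearMap.sub_apply, LinearMap.smul_apply, Module.End.one_apply,
              map_sub, map_smul, hc]
            abel
          have e3 : ((X - μ • 1) ^ (t + 1)) v = (X - μ • 1) (((X - μ • 1) ^ t) v) := by
            rw [pow_succ']; rfl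
          rw [e1, hw2, map_add, e2, e3]
          abel
      obtain ⟨w, hw, hw2⟩ := inner n
      have hvn : ((X - μ • 1) ^ n) v = 0 := (hEker μ v).mp hv
      have hBn : ((X - μ • 1) ^ n) ((Y ^ p) v) = w := by
        rw [hw2, hvn, map_zero, zero_add]
      have h2n : ((X - μ • 1) ^ (n + n)) ((Y ^ p) v) = 0 := by
        rw [pow_add, Module.End.mul_apply, hBn]
        exact (hEker μ w).mp hw
      have := Module.End.ker_pow_le_ker_pow_finrank (X - μ • 1) (n + n)
        (LinearMap.mem_ker.mpr h2n)
      rw [hEker]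
      exact LinearMap.mem_ker.mp this
  have hYinv : ∀ μ : k, (E μ).map Y ≤ E μ := by
    intro μ
    rintro _ ⟨v, hv, rfl⟩
    have := key μ n 1 (by omega) v hv
    simpa using this
  -- identification with generalized eigenspaces
  have hE : ∀ μ : k, E μ = Module.End.genEigenspace X μ (n : ℕ) := by
    intro μ; rw [hEdef, Module.End.genEigenspace_nat]
  have hEmax : ∀ μ : k, E μ = Module.End.maxGenEigenspace X μ := by
    intro μ
    rw [hE, hn, ← Module.End.maxGenEigenspace_eq_genEigenspace_finrank]
  have hindep : iSupIndep E := by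
    have h1 : E = fun μ => Module.End.genEigenspace X μ (n : ℕ) := funext hE
    rw [h1]
    exact Module.End.independent_genEigenspace X (n : ℕ)
  have htop : (⨆ μ : k, E μ) = ⊤ := by
    have h1 : E = fun μ => Module.End.maxGenEigenspace X μ := funext hEmax
    rw [h1]
    exact Module.End.iSup_maxGenEigenspace_eq_top X
  refine ⟨hYinv, hXinv, hindep, htop, ?_⟩
  rintro ⟨hnt, hind⟩
  have hex : ∃ μ : k, E μ ≠ ⊥ := by
    by_contra hc
    push_neg at hc
    have hbot : (⨆ μ : k, E μ) = ⊥ := by simp [hc]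
    rw [htop] at hbot
    exact top_ne_bot hbot
  obtain ⟨μ₀, hμ₀⟩ := hex
  refine ⟨μ₀, hμ₀, ?_⟩
  intro ν hν
  by_contra hne
  set q : Submodule k V := ⨆ ρ : k, ⨆ _ : ρ ≠ ν, E ρ with hq
  have hdisj : Disjoint (E ν) q := hindep ν
  have hcodis : Codisjoint (E ν) q := by
    rw [codisjoint_iff_le_sup]
    rw [← htop]
    refine iSup_le fun ρ => ?_
    by_cases hρ : ρ = ν
    · rw [hρ]; exact le_sup_left
    · exact le_trans (le_iSup_of_le ρ (le_iSup (fun _ : ρ ≠ ν => E ρ) hρ)) le_sup_right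
  have hmapq : ∀ (Z : V →ₗ[k] V), (∀ μ : k, (E μ).map Z ≤ E μ) → q.map Z ≤ q := by
    intro Z hZ
    rw [hq, Submodule.map_iSup]
    refine iSup_le fun ρ => ?_
    rw [Submodule.map_iSup]
    refine iSup_le fun hρ => ?_
    exact le_trans (hZ ρ) (le_iSup_of_le ρ (le_iSup (fun _ : ρ ≠ ν => E ρ) hρ))
  rcases hind (E ν) q (hXinv ν) (hYinv ν) (hmapq X hXinv) (hmapq Y hYinv)
      ⟨hdisj, hcodis⟩ with h1 | h1
  · exact hν h1
  · have hle : E μ₀ ≤ q := le_iSup_of_le μ₀ (le_iSup (fun _ : μ₀ ≠ ν => E μ₀) (fun he => hne (he ▸ rfl)))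
    rw [h1, le_bot_iff] at hle
    exact hμ₀ hle
end
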